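/- arXiv:math/9806099 — 5 statements merged into one kernel-verified Lean document; each statement's English description precedes it below -/
import Mathlib

section
/- Suppose the real constants V_min, V_max, K satisfy V_min ≤ V(x) ≤ V_max and |V'(x)| ≤ K for all x ≥ 0, and suppose in addition that V''(x) ≤ 0 for all x ≥ 0. Then for every Orr–Sommerfeld eigenpair (u, λ): a·R·V_min − (R/2)·K ≤ Im λ ≤ a·R·V_max. In particular, if moreover V ≤ 1 on [0,∞), then Im λ ≤ a·R. -/
open MeasureTheory Set Complex Filter Topology

/-- Iterated derivative on `[0, ∞)` of a complex-valued function. -/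
noncomputable def Dc (f : ℝ → ℂ) (n : ℕ) : ℝ → ℂ := iteratedDerivWithin n f (Set.Ici 0)

/-- Iterated derivative on `[0, ∞)` of a real-valued function. -/
noncomputable def Dr (f : ℝ → ℝ) (n : ℕ) : ℝ → ℝ := iteratedDerivWithin n f (Set.Ici 0)

/-- `f ∈ L²(0, ∞)`. -/
def L2 (f : ℝ → ℂ) : Prop := MemLp f 2 (volume.restrict (Set.Ioi 0))

/-- `(u, λ)` is an eigenpair of the Orr–Sommerfeld problem on `[0, ∞)` with wave
number `a`, Reynolds number `R` and flow profile `V`:  `u` is four times continuously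
differentiable, not identically zero, `u, u', u'', u''', u''''` are in `L²(0, ∞)`,
`u(0) = u'(0) = 0`, and the Orr–Sommerfeld equation holds on `[0, ∞)`. -/
def IsOSEigenpair (a R : ℝ) (V : ℝ → ℝ) (u : ℝ → ℂ) (lam : ℂ) : Prop :=
  ContDiffOn ℝ 4 u (Set.Ici 0) ∧
  (∀ n : ℕ, n ≤ 4 → L2 (Dc u n)) ∧
  (∃ x : ℝ, 0 ≤ x ∧ u x ≠ 0) ∧
  u 0 = 0 ∧ Dc u 1 0 = 0 ∧
  ∀ x : ℝ, 0 ≤ x →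
    Dc u 4 x - 2 * (a : ℂ)^2 * Dc u 2 x + (a : ℂ)^4 * u x
      + Complex.I * (a : ℂ) * (R : ℂ) *
        ((V x : ℂ) * (-(Dc u 2 x) + (a : ℂ)^2 * u x) + (Dr V 2 x : ℂ) * u x)
    = lam * (-(Dc u 2 x) + (a : ℂ)^2 * u x)

/- ### Auxiliary lemmas -/

lemma l2_mul_int {f g : ℝ → ℂ} {μ : Measure ℝ} (hf : MemLp f 2 μ) (hg : MemLp g 2 μ) :
    Integrable (fun x => f x * g x) μ := by
  have h1 : Integrable (fun x => ‖f x‖ ^ 2) μ :=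
    (memLp_two_iff_integrable_sq_norm hf.1).mp hf
  have h2 : Integrable (fun x => ‖g x‖ ^ 2) μ :=
    (memLp_two_iff_integrable_sq_norm hg.1).mp hg
  refine Integrable.mono' ((h1.add h2).const_mul (1/2)) (hf.1.mul hg.1) ?_
  refine Filter.Eventually.of_forall fun x => ?_
  have : ‖f x * g x‖ = ‖f x‖ * ‖g x‖ := norm_mul _ _
  rw [this, Pi.add_apply]
  nlinarith [sq_nonneg (‖f x‖ - ‖g x‖), norm_nonneg (f x), norm_nonneg (g x)]

lemma memLp_conj {f : ℝ → ℂ} {μ : Measure ℝ} (hf : MemLp f 2 μ) :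
    MemLp (fun x => (starRingEnd ℂ) (f x)) 2 μ := by
  refine MemLp.of_le_mul (c := 1) hf
    (Complex.continuous_conj.comp_aestronglyMeasurable hf.1) ?_
  exact Filter.Eventually.of_forall fun x => by simp

lemma l2_mul_conj_int {f g : ℝ → ℂ} {μ : Measure ℝ} (hf : MemLp f 2 μ) (hg : MemLp g 2 μ) :
    Integrable (fun x => f x * (starRingEnd ℂ) (g x)) μ :=
  l2_mul_int hf (memLp_conj hg)

lemma lim_eq_zero_of_integrable {g : ℝ → ℂ} (hg : IntegrableOn g (Set.Ioi 0))
    {L : ℂ} (hL : Tendsto g atTop (𝓝 L)) : L = 0 := by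
  by_contra h
  have hε : 0 < ‖L‖ := norm_pos_iff.mpr h
  have hev : ∀ᶠ x in atTop, ‖L‖ / 2 ≤ ‖g x‖ := by
    have := hL.norm.eventually_const_lt (show ‖L‖/2 < ‖L‖ by linarith)
    exact this.mono fun x hx => le_of_lt hx
  obtain ⟨M, hM⟩ := hev.exists_forall_of_atTop
  set M' : ℝ := max M 1 with hM'
  have hsub : Set.Ioi M' ⊆ Set.Ioi 0 := Ioi_subset_Ioi (by positivity)
  have hconst : IntegrableOn (fun _ : ℝ => ‖L‖ / 2) (Set.Ioi M') := by
    refine Integrable.mono' ((hg.mono_set hsub).norm) aestronglyMeasurable_const ?_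
    rw [ae_restrict_iff' measurableSet_Ioi]
    refine Filter.Eventually.of_forall fun x hx => ?_
    have : M ≤ x := le_trans (le_max_left _ _) (le_of_lt hx)
    simpa [_root_.abs_of_nonneg (by positivity : (0:ℝ) ≤ ‖L‖/2)] using hM x this
  rw [integrableOn_const_iff] at hconst
  rcases hconst with h0 | hfin
  · have : ‖L‖ / 2 = 0 := by simpa using h0
    linarith
  · simp [Real.volume_Ioi] at hfin

lemma tendsto_zero_deriv {g g' : ℝ → ℂ}
    (hd : ∀ x ∈ Set.Ioi (0:ℝ), HasDerivAt g (g' x) x)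
    (hi : IntegrableOn g' (Set.Ioi 0)) (hg : IntegrableOn g (Set.Ioi 0)) :
    Tendsto g atTop (𝓝 0) := by
  have h := tendsto_limUnder_of_hasDerivAt_of_integrableOn_Ioi hd hi
  rwa [lim_eq_zero_of_integrable hg h] at h

lemma ibp_zero {F F' : ℝ → ℂ}
    (hc : ContinuousWithinAt F (Set.Ici 0) 0)
    (hd : ∀ x ∈ Set.Ioi (0:ℝ), HasDerivAt F (F' x) x)
    (hi : IntegrableOn F' (Set.Ioi 0))
    (hF0 : F 0 = 0) (hlim : Tendsto F atTop (𝓝 0)) :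
    ∫ x in Set.Ioi (0:ℝ), F' x = 0 := by
  rw [integral_Ioi_of_hasDerivAt_of_tendsto hc hd hi hlim, hF0, sub_zero]

lemma mul_conj_self (z : ℂ) : z * (starRingEnd ℂ) z = ((‖z‖^2 : ℝ) : ℂ) := by
  rw [Complex.mul_conj]; norm_cast; rw [Complex.normSq_eq_norm_sq]

set_option maxHeartbeats 2000000 in
/-- If `V'' ≤ 0` on `[0, ∞)`, then for every Orr–Sommerfeld eigenvalue `λ` one has
`aRV_min − (R/2)K ≤ Im λ ≤ aRV_max`; in particular `Im λ ≤ aR` if moreover `V ≤ 1`. -/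
theorem os_eigenvalue_im_bounds_concave_profile
    (a R : ℝ) (ha : 0 < a) (hR : 0 < R)
    (V : ℝ → ℝ) (hV : ContDiffOn ℝ 2 V (Set.Ici 0))
    (Vmin Vmax K : ℝ)
    (hVbd : ∀ x : ℝ, 0 ≤ x → Vmin ≤ V x ∧ V x ≤ Vmax)
    (hV'bd : ∀ x : ℝ, 0 ≤ x → |Dr V 1 x| ≤ K)
    (hV'' : ∀ x : ℝ, 0 ≤ x → Dr V 2 x ≤ 0)
    (u : ℝ → ℂ) (lam : ℂ) (hu : IsOSEigenpair a R V u lam) :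
    (a * R * Vmin - R / 2 * K ≤ lam.im ∧ lam.im ≤ a * R * Vmax) ∧
    ((∀ x : ℝ, 0 ≤ x → V x ≤ 1) → lam.im ≤ a * R) := by
  obtain ⟨hreg, hl2, ⟨x₀, hx₀0, hux₀⟩, hu0, hu'0, heq⟩ := hu
  have hK0 : 0 ≤ K := le_trans (abs_nonneg _) (hV'bd 0 le_rfl)
  set CV : ℝ := max |Vmin| |Vmax| with hCVdef
  have hCV : ∀ x : ℝ, 0 ≤ x → |V x| ≤ CV := by
    intro x hx
    rcases hVbd x hx with ⟨h1, h2⟩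
    rw [abs_le]; constructor
    · calc -CV ≤ -|Vmin| := by simp [hCVdef]
        _ ≤ Vmin := neg_abs_le _
        _ ≤ V x := h1
    · exact le_trans h2 (le_trans (le_abs_self _) (le_max_right _ _))
  have hDc0 : Dc u 0 = u := funext fun x => by simp [Dc]
  have hDr0 : Dr V 0 = V := funext fun x => by simp [Dr]
  -- derivative and continuity facts
  have hud : ∀ n : ℕ, n < 4 → ∀ x ∈ Set.Ioi (0:ℝ), HasDerivAt (Dc u n) (Dc u (n+1) x) x := by
    intro n hn x hx
    have hdiff : DifferentiableOn ℝ (Dc u n) (Set.Ici 0) :=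
      hreg.differentiableOn_iteratedDerivWithin (by exact_mod_cast hn) (uniqueDiffOn_Ici 0)
    have hx' : x ∈ Set.Ici (0:ℝ) := Set.mem_Ici.mpr (le_of_lt hx)
    have h1 : Dc u (n+1) x = derivWithin (Dc u n) (Set.Ici 0) x :=
      congrFun iteratedDerivWithin_succ x
    have h2 := (hdiff x hx').hasDerivWithinAt
    rw [← h1] at h2
    exact h2.hasDerivAt (Ici_mem_nhds hx)
  have huc : ∀ n : ℕ, n ≤ 4 → ContinuousOn (Dc u n) (Set.Ici 0) := fun n hn =>
    hreg.continuousOn_iteratedDerivWithin (by exact_mod_cast hn) (uniqueDiffOn_Ici 0)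
  have hvd : ∀ n : ℕ, n < 2 → ∀ x ∈ Set.Ioi (0:ℝ), HasDerivAt (Dr V n) (Dr V (n+1) x) x := by
    intro n hn x hx
    have hdiff : DifferentiableOn ℝ (Dr V n) (Set.Ici 0) :=
      hV.differentiableOn_iteratedDerivWithin (by exact_mod_cast hn) (uniqueDiffOn_Ici 0)
    have hx' : x ∈ Set.Ici (0:ℝ) := Set.mem_Ici.mpr (le_of_lt hx)
    have h1 : Dr V (n+1) x = derivWithin (Dr V n) (Set.Ici 0) x :=
      congrFun iteratedDerivWithin_succ x
    have h2 := (hdiff x hx').hasDerivWithinAt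
    rw [← h1] at h2
    exact h2.hasDerivAt (Ici_mem_nhds hx)
  have hvc : ∀ n : ℕ, n ≤ 2 → ContinuousOn (Dr V n) (Set.Ici 0) := fun n hn =>
    hV.continuousOn_iteratedDerivWithin (by exact_mod_cast hn) (uniqueDiffOn_Ici 0)
  -- Memℒp facts
  have hM : ∀ n : ℕ, n ≤ 4 → MemLp (Dc u n) 2 (volume.restrict (Set.Ioi 0)) := hl2
  -- products of L² functions are integrable
  have hkey : ∀ m n : ℕ, m ≤ 4 → n ≤ 4 →
      Integrable (fun x => Dc u m x * (starRingEnd ℂ) (Dc u n x))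
        (volume.restrict (Set.Ioi 0)) :=
    fun m n hm hn => l2_mul_conj_int (hM m hm) (hM n hn)
  -- limits at infinity
  have Tlim : ∀ m n : ℕ, m ≤ 3 → n ≤ 3 →
      Tendsto (fun x => Dc u m x * (starRingEnd ℂ) (Dc u n x)) atTop (𝓝 0) := by
    intro m n hm hn
    refine tendsto_zero_deriv (g' := fun x =>
      Dc u (m+1) x * (starRingEnd ℂ) (Dc u n x)
        + Dc u m x * (starRingEnd ℂ) (Dc u (n+1) x)) ?_ ?_ ?_
    · intro x hx
      exact ((hud m (by omega) x hx).mul (hud n (by omega) x hx).star)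
    · exact (hkey (m+1) n (by omega) (by omega)).add (hkey m (n+1) (by omega) (by omega))
    · exact hkey m n (by omega) (by omega)
  -- continuity bundles
  have hconjc : ∀ n : ℕ, n ≤ 4 → ContinuousOn (fun x => (starRingEnd ℂ) (Dc u n x)) (Set.Ici 0) :=
    fun n hn => Complex.continuous_conj.comp_continuousOn (huc n hn)
  have hu00 : Dc u 0 0 = 0 := by rw [hDc0]; exact hu0
  have hVd : ∀ x ∈ Set.Ioi (0:ℝ), HasDerivAt V (Dr V 1 x) x := by
    intro x hx; simpa [hDr0] using hvd 0 (by norm_num) x hx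
  have hV1d : ∀ x ∈ Set.Ioi (0:ℝ), HasDerivAt (Dr V 1) (Dr V 2 x) x := by
    intro x hx; simpa using hvd 1 (by norm_num) x hx
  have hVrc : ContinuousOn (fun x => (V x : ℂ)) (Set.Ici 0) := by
    have := hvc 0 (by norm_num); rw [hDr0] at this
    exact Complex.continuous_ofReal.comp_continuousOn this
  have hV1rc : ContinuousOn (fun x => (Dr V 1 x : ℂ)) (Set.Ici 0) :=
    Complex.continuous_ofReal.comp_continuousOn (hvc 1 (by norm_num))
  have smV : AEStronglyMeasurable (fun x => (V x : ℂ)) (volume.restrict (Set.Ioi 0)) :=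
    (hVrc.mono Ioi_subset_Ici_self).aestronglyMeasurable measurableSet_Ioi
  have smV1 : AEStronglyMeasurable (fun x => (Dr V 1 x : ℂ)) (volume.restrict (Set.Ioi 0)) :=
    (hV1rc.mono Ioi_subset_Ici_self).aestronglyMeasurable measurableSet_Ioi
  have aeV : ∀ᵐ x ∂(volume.restrict (Set.Ioi 0)), ‖(V x : ℂ)‖ ≤ CV := by
    rw [ae_restrict_iff' measurableSet_Ioi]
    exact Filter.Eventually.of_forall fun x hx => by
      simpa [Complex.norm_real] using hCV x (le_of_lt hx)
  have aeV1 : ∀ᵐ x ∂(volume.restrict (Set.Ioi 0)), ‖(Dr V 1 x : ℂ)‖ ≤ K := by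
    rw [ae_restrict_iff' measurableSet_Ioi]
    exact Filter.Eventually.of_forall fun x hx => by
      simpa [Complex.norm_real] using hV'bd x (le_of_lt hx)
  have hbV : ∀ g : ℝ → ℂ, Integrable g (volume.restrict (Set.Ioi 0)) →
      Integrable (fun x => (V x : ℂ) * g x) (volume.restrict (Set.Ioi 0)) :=
    fun g hg => hg.bdd_mul smV aeV
  have hbV1 : ∀ g : ℝ → ℂ, Integrable g (volume.restrict (Set.Ioi 0)) →
      Integrable (fun x => (Dr V 1 x : ℂ) * g x) (volume.restrict (Set.Ioi 0)) :=
    fun g hg => hg.bdd_mul smV1 aeV1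
  -- e1
  have e1 : (∫ x in Set.Ioi (0:ℝ), Dc u 4 x * (starRingEnd ℂ) (Dc u 0 x))
      + ∫ x in Set.Ioi (0:ℝ), Dc u 3 x * (starRingEnd ℂ) (Dc u 1 x) = 0 := by
    have h := ibp_zero (F := fun x => Dc u 3 x * (starRingEnd ℂ) (Dc u 0 x))
      (F' := fun x => Dc u 4 x * (starRingEnd ℂ) (Dc u 0 x)
        + Dc u 3 x * (starRingEnd ℂ) (Dc u 1 x))
      (((huc 3 (by norm_num)).mul (hconjc 0 (by norm_num))) 0 Set.self_mem_Ici)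
      (fun x hx => (hud 3 (by norm_num) x hx).mul (hud 0 (by norm_num) x hx).star)
      ((hkey 4 0 le_rfl (by norm_num)).add (hkey 3 1 (by norm_num) (by norm_num)))
      (by simp [hu00]) (Tlim 3 0 (by norm_num) (by norm_num))
    rwa [integral_add (hkey 4 0 le_rfl (by norm_num))
      (hkey 3 1 (by norm_num) (by norm_num))] at h
  -- e2
  have e2 : (∫ x in Set.Ioi (0:ℝ), Dc u 3 x * (starRingEnd ℂ) (Dc u 1 x))
      + ∫ x in Set.Ioi (0:ℝ), Dc u 2 x * (starRingEnd ℂ) (Dc u 2 x) = 0 := by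
    have h := ibp_zero (F := fun x => Dc u 2 x * (starRingEnd ℂ) (Dc u 1 x))
      (F' := fun x => Dc u 3 x * (starRingEnd ℂ) (Dc u 1 x)
        + Dc u 2 x * (starRingEnd ℂ) (Dc u 2 x))
      (((huc 2 (by norm_num)).mul (hconjc 1 (by norm_num))) 0 Set.self_mem_Ici)
      (fun x hx => (hud 2 (by norm_num) x hx).mul (hud 1 (by norm_num) x hx).star)
      ((hkey 3 1 (by norm_num) (by norm_num)).add (hkey 2 2 (by norm_num) (by norm_num)))
      (by simp [hu'0]) (Tlim 2 1 (by norm_num) (by norm_num))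
    rwa [integral_add (hkey 3 1 (by norm_num) (by norm_num))
      (hkey 2 2 (by norm_num) (by norm_num))] at h
  -- e3
  have e3 : (∫ x in Set.Ioi (0:ℝ), Dc u 2 x * (starRingEnd ℂ) (Dc u 0 x))
      + ∫ x in Set.Ioi (0:ℝ), Dc u 1 x * (starRingEnd ℂ) (Dc u 1 x) = 0 := by
    have h := ibp_zero (F := fun x => Dc u 1 x * (starRingEnd ℂ) (Dc u 0 x))
      (F' := fun x => Dc u 2 x * (starRingEnd ℂ) (Dc u 0 x)
        + Dc u 1 x * (starRingEnd ℂ) (Dc u 1 x))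
      (((huc 1 (by norm_num)).mul (hconjc 0 (by norm_num))) 0 Set.self_mem_Ici)
      (fun x hx => (hud 1 (by norm_num) x hx).mul (hud 0 (by norm_num) x hx).star)
      ((hkey 2 0 (by norm_num) (by norm_num)).add (hkey 1 1 (by norm_num) (by norm_num)))
      (by simp [hu00]) (Tlim 1 0 (by norm_num) (by norm_num))
    rwa [integral_add (hkey 2 0 (by norm_num) (by norm_num))
      (hkey 1 1 (by norm_num) (by norm_num))] at h
  -- e4
  have e4 : (∫ x in Set.Ioi (0:ℝ), (Dr V 1 x : ℂ) * (Dc u 1 x * (starRingEnd ℂ) (Dc u 0 x)))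
      + ((∫ x in Set.Ioi (0:ℝ), (V x : ℂ) * (Dc u 2 x * (starRingEnd ℂ) (Dc u 0 x)))
        + ∫ x in Set.Ioi (0:ℝ), (V x : ℂ) * (Dc u 1 x * (starRingEnd ℂ) (Dc u 1 x))) = 0 := by
    have h := ibp_zero (F := fun x => (V x : ℂ) * (Dc u 1 x * (starRingEnd ℂ) (Dc u 0 x)))
      (F' := fun x => (Dr V 1 x : ℂ) * (Dc u 1 x * (starRingEnd ℂ) (Dc u 0 x))
        + (V x : ℂ) * (Dc u 2 x * (starRingEnd ℂ) (Dc u 0 x)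
          + Dc u 1 x * (starRingEnd ℂ) (Dc u 1 x)))
      ((hVrc.mul ((huc 1 (by norm_num)).mul (hconjc 0 (by norm_num)))) 0 Set.self_mem_Ici)
      (fun x hx => ((hVd x hx).ofReal_comp).mul
        ((hud 1 (by norm_num) x hx).mul (hud 0 (by norm_num) x hx).star))
      ((hbV1 _ (hkey 1 0 (by norm_num) (by norm_num))).add
        (hbV (fun x => Dc u 2 x * (starRingEnd ℂ) (Dc u 0 x)
          + Dc u 1 x * (starRingEnd ℂ) (Dc u 1 x))
          ((hkey 2 0 (by norm_num) (by norm_num)).add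
            (hkey 1 1 (by norm_num) (by norm_num)))))
      (by simp [hu00]) ?_
    · rw [integral_add (hbV1 _ (hkey 1 0 (by norm_num) (by norm_num)))
        (hbV (fun x => Dc u 2 x * (starRingEnd ℂ) (Dc u 0 x)
          + Dc u 1 x * (starRingEnd ℂ) (Dc u 1 x))
          ((hkey 2 0 (by norm_num) (by norm_num)).add
            (hkey 1 1 (by norm_num) (by norm_num))))] at h
      rwa [show (∫ x in Set.Ioi (0:ℝ), (V x : ℂ) * (Dc u 2 x * (starRingEnd ℂ) (Dc u 0 x)
          + Dc u 1 x * (starRingEnd ℂ) (Dc u 1 x)))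
        = (∫ x in Set.Ioi (0:ℝ), (V x : ℂ) * (Dc u 2 x * (starRingEnd ℂ) (Dc u 0 x)))
          + ∫ x in Set.Ioi (0:ℝ), (V x : ℂ) * (Dc u 1 x * (starRingEnd ℂ) (Dc u 1 x)) from by
          rw [← integral_add (hbV _ (hkey 2 0 (by norm_num) (by norm_num)))
            (hbV _ (hkey 1 1 (by norm_num) (by norm_num)))]
          exact setIntegral_congr_fun measurableSet_Ioi fun x _ => mul_add _ _ _] at h
    · refine squeeze_zero_norm' ?_ (a := fun x => CV * ‖Dc u 1 x * (starRingEnd ℂ) (Dc u 0 x)‖) ?_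
      · filter_upwards [eventually_ge_atTop (0:ℝ)] with x hx
        rw [norm_mul]
        exact mul_le_mul_of_nonneg_right
          (by simpa [Complex.norm_real] using hCV x hx) (norm_nonneg _)
      · simpa using (Tlim 1 0 (by norm_num) (by norm_num)).norm.const_mul CV
  -- Memℒp of V''·u from the equation
  have hiaR : (Complex.I * (a:ℂ) * (R:ℂ)) ≠ 0 := by
    simp [Complex.I_ne_zero, Complex.ofReal_ne_zero, ne_of_gt ha, ne_of_gt hR]
  have hw : MemLp (fun x => -(Dc u 2 x) + (a:ℂ)^2 * Dc u 0 x) 2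
      (volume.restrict (Set.Ioi 0)) :=
    (hM 2 (by norm_num)).neg.add ((hM 0 (by norm_num)).const_mul _)
  have hVw : MemLp (fun x => (V x : ℂ) * (-(Dc u 2 x) + (a:ℂ)^2 * Dc u 0 x)) 2
      (volume.restrict (Set.Ioi 0)) := by
    refine MemLp.of_le_mul (c := CV) hw (smV.mul hw.1) ?_
    rw [ae_restrict_iff' measurableSet_Ioi]
    refine Filter.Eventually.of_forall fun x hx => ?_
    rw [norm_mul]
    exact mul_le_mul_of_nonneg_right
      (by simpa [Complex.norm_real] using hCV x (le_of_lt hx)) (norm_nonneg _)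
  have hm2 : MemLp (fun x => (Dr V 2 x : ℂ) * Dc u 0 x) 2 (volume.restrict (Set.Ioi 0)) := by
    have hphi : MemLp (fun x => (Complex.I * (a:ℂ) * (R:ℂ))⁻¹
        * (lam * (-(Dc u 2 x) + (a:ℂ)^2 * Dc u 0 x)
          - (Dc u 4 x - 2*(a:ℂ)^2 * Dc u 2 x + (a:ℂ)^4 * Dc u 0 x))
        - (V x : ℂ) * (-(Dc u 2 x) + (a:ℂ)^2 * Dc u 0 x)) 2
        (volume.restrict (Set.Ioi 0)) := by
      refine MemLp.sub ?_ hVw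
      refine MemLp.const_mul ?_ _
      refine MemLp.sub (hw.const_mul _) ?_
      exact ((hM 4 le_rfl).sub ((hM 2 (by norm_num)).const_mul _)).add
        ((hM 0 (by norm_num)).const_mul _)
    refine hphi.ae_eq ?_
    rw [Filter.EventuallyEq, ae_restrict_iff' measurableSet_Ioi]
    refine Filter.Eventually.of_forall fun x hx => ?_
    have h := heq x (le_of_lt hx)
    rw [hDc0]
    linear_combination (-(Complex.I * (a:ℂ) * (R:ℂ))⁻¹) * h
      + ((V x : ℂ) * (-(Dc u 2 x) + (a:ℂ)^2 * u x) + (Dr V 2 x : ℂ) * u x) * inv_mul_cancel₀ hiaR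
  have g6int : Integrable (fun x => (Dr V 2 x : ℂ) * (Dc u 0 x * (starRingEnd ℂ) (Dc u 0 x)))
      (volume.restrict (Set.Ioi 0)) := by
    have := l2_mul_conj_int hm2 (hM 0 (by norm_num))
    exact this.congr (Filter.Eventually.of_forall fun x => by ring)
  -- e5
  have e5 : (∫ x in Set.Ioi (0:ℝ), (Dr V 2 x : ℂ) * (Dc u 0 x * (starRingEnd ℂ) (Dc u 0 x)))
      + ((∫ x in Set.Ioi (0:ℝ), (Dr V 1 x : ℂ) * (Dc u 1 x * (starRingEnd ℂ) (Dc u 0 x)))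
        + ∫ x in Set.Ioi (0:ℝ), (Dr V 1 x : ℂ) * (Dc u 0 x * (starRingEnd ℂ) (Dc u 1 x))) = 0 := by
    have h := ibp_zero (F := fun x => (Dr V 1 x : ℂ) * (Dc u 0 x * (starRingEnd ℂ) (Dc u 0 x)))
      (F' := fun x => (Dr V 2 x : ℂ) * (Dc u 0 x * (starRingEnd ℂ) (Dc u 0 x))
        + (Dr V 1 x : ℂ) * (Dc u 1 x * (starRingEnd ℂ) (Dc u 0 x)
          + Dc u 0 x * (starRingEnd ℂ) (Dc u 1 x)))
      ((hV1rc.mul ((huc 0 (by norm_num)).mul (hconjc 0 (by norm_num)))) 0 Set.self_mem_Ici)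
      (fun x hx => ((hV1d x hx).ofReal_comp).mul
        ((hud 0 (by norm_num) x hx).mul (hud 0 (by norm_num) x hx).star))
      (g6int.add (hbV1 (fun x => Dc u 1 x * (starRingEnd ℂ) (Dc u 0 x)
          + Dc u 0 x * (starRingEnd ℂ) (Dc u 1 x))
        ((hkey 1 0 (by norm_num) (by norm_num)).add (hkey 0 1 (by norm_num) (by norm_num)))))
      (by simp [hu00]) ?_
    · rw [integral_add g6int (hbV1 (fun x => Dc u 1 x * (starRingEnd ℂ) (Dc u 0 x)
          + Dc u 0 x * (starRingEnd ℂ) (Dc u 1 x))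
        ((hkey 1 0 (by norm_num) (by norm_num)).add
          (hkey 0 1 (by norm_num) (by norm_num))))] at h
      rwa [show (∫ x in Set.Ioi (0:ℝ), (Dr V 1 x : ℂ) * (Dc u 1 x * (starRingEnd ℂ) (Dc u 0 x)
          + Dc u 0 x * (starRingEnd ℂ) (Dc u 1 x)))
        = (∫ x in Set.Ioi (0:ℝ), (Dr V 1 x : ℂ) * (Dc u 1 x * (starRingEnd ℂ) (Dc u 0 x)))
          + ∫ x in Set.Ioi (0:ℝ), (Dr V 1 x : ℂ) * (Dc u 0 x * (starRingEnd ℂ) (Dc u 1 x)) from by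
          rw [← integral_add (hbV1 _ (hkey 1 0 (by norm_num) (by norm_num)))
            (hbV1 _ (hkey 0 1 (by norm_num) (by norm_num)))]
          exact setIntegral_congr_fun measurableSet_Ioi fun x _ => mul_add _ _ _] at h
    · refine squeeze_zero_norm' ?_
        (a := fun x => K * ‖Dc u 0 x * (starRingEnd ℂ) (Dc u 0 x)‖) ?_
      · filter_upwards [eventually_ge_atTop (0:ℝ)] with x hx
        rw [norm_mul]
        exact mul_le_mul_of_nonneg_right
          (by simpa [Complex.norm_real] using hV'bd x hx) (norm_nonneg _)
      · simpa using (Tlim 0 0 (by norm_num) (by norm_num)).norm.const_mul K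
  -- conjugate relation
  have hC3 : (∫ x in Set.Ioi (0:ℝ), (Dr V 1 x : ℂ) * (Dc u 0 x * (starRingEnd ℂ) (Dc u 1 x)))
      = (starRingEnd ℂ) (∫ x in Set.Ioi (0:ℝ),
          (Dr V 1 x : ℂ) * (Dc u 1 x * (starRingEnd ℂ) (Dc u 0 x))) := by
    rw [← integral_conj]
    exact setIntegral_congr_fun measurableSet_Ioi fun x _ => by
      simp only [map_mul, Complex.conj_conj, Complex.conj_ofReal]; ring
  -- real-valued integrals
  set i0 : ℝ := ∫ x in Set.Ioi (0:ℝ), ‖Dc u 0 x‖^2 with hi0def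
  set i1 : ℝ := ∫ x in Set.Ioi (0:ℝ), ‖Dc u 1 x‖^2 with hi1def
  set i2 : ℝ := ∫ x in Set.Ioi (0:ℝ), ‖Dc u 2 x‖^2 with hi2def
  set sv1 : ℝ := ∫ x in Set.Ioi (0:ℝ), V x * ‖Dc u 1 x‖^2 with hsv1def
  set sv0 : ℝ := ∫ x in Set.Ioi (0:ℝ), V x * ‖Dc u 0 x‖^2 with hsv0def
  set w2 : ℝ := ∫ x in Set.Ioi (0:ℝ), Dr V 2 x * ‖Dc u 0 x‖^2 with hw2def
  set C1 : ℂ := ∫ x in Set.Ioi (0:ℝ), (Dr V 1 x : ℂ) * (Dc u 1 x * (starRingEnd ℂ) (Dc u 0 x))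
    with hC1def
  -- reality conversions
  have hA22 : (∫ x in Set.Ioi (0:ℝ), Dc u 2 x * (starRingEnd ℂ) (Dc u 2 x)) = ((i2:ℝ):ℂ) := by
    rw [hi2def]
    exact Eq.trans (setIntegral_congr_fun measurableSet_Ioi fun x _ => mul_conj_self _)
      integral_ofReal
  have hA11 : (∫ x in Set.Ioi (0:ℝ), Dc u 1 x * (starRingEnd ℂ) (Dc u 1 x)) = ((i1:ℝ):ℂ) := by
    rw [hi1def]
    exact Eq.trans (setIntegral_congr_fun measurableSet_Ioi fun x _ => mul_conj_self _)
      integral_ofReal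
  have hA00 : (∫ x in Set.Ioi (0:ℝ), Dc u 0 x * (starRingEnd ℂ) (Dc u 0 x)) = ((i0:ℝ):ℂ) := by
    rw [hi0def]
    exact Eq.trans (setIntegral_congr_fun measurableSet_Ioi fun x _ => mul_conj_self _)
      integral_ofReal
  have hC2 : (∫ x in Set.Ioi (0:ℝ), (V x : ℂ) * (Dc u 1 x * (starRingEnd ℂ) (Dc u 1 x)))
      = ((sv1:ℝ):ℂ) := by
    rw [hsv1def]
    refine Eq.trans (setIntegral_congr_fun measurableSet_Ioi fun x _ => ?_) integral_ofReal
    rw [mul_conj_self]; norm_cast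
  have hB5 : (∫ x in Set.Ioi (0:ℝ), (V x : ℂ) * (Dc u 0 x * (starRingEnd ℂ) (Dc u 0 x)))
      = ((sv0:ℝ):ℂ) := by
    rw [hsv0def]
    refine Eq.trans (setIntegral_congr_fun measurableSet_Ioi fun x _ => ?_) integral_ofReal
    rw [mul_conj_self]; norm_cast
  have hB6 : (∫ x in Set.Ioi (0:ℝ), (Dr V 2 x : ℂ) * (Dc u 0 x * (starRingEnd ℂ) (Dc u 0 x)))
      = ((w2:ℝ):ℂ) := by
    rw [hw2def]
    refine Eq.trans (setIntegral_congr_fun measurableSet_Ioi fun x _ => ?_) integral_ofReal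
    rw [mul_conj_self]; norm_cast
  -- derived values
  have hA40 : (∫ x in Set.Ioi (0:ℝ), Dc u 4 x * (starRingEnd ℂ) (Dc u 0 x)) = ((i2:ℝ):ℂ) := by
    linear_combination e1 - e2 + hA22
  have hA20 : (∫ x in Set.Ioi (0:ℝ), Dc u 2 x * (starRingEnd ℂ) (Dc u 0 x)) = -((i1:ℝ):ℂ) := by
    linear_combination e3 - hA11
  have hB4 : (∫ x in Set.Ioi (0:ℝ), (V x : ℂ) * (Dc u 2 x * (starRingEnd ℂ) (Dc u 0 x)))
      = -C1 - ((sv1:ℝ):ℂ) := by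
    linear_combination e4 - hC2
  have hw2C : ((w2:ℝ):ℂ) = -C1 - (starRingEnd ℂ) C1 := by
    linear_combination e5 - hB6 - hC3
  have hw2re : w2 = -(2*C1.re) := by
    have := congrArg Complex.re hw2C
    simp at this
    linarith
  -- the main integral identity
  have hpt : ∀ x ∈ Set.Ioi (0:ℝ),
      Dc u 4 x * (starRingEnd ℂ) (Dc u 0 x)
      + ((-2*(a:ℂ)^2) * (Dc u 2 x * (starRingEnd ℂ) (Dc u 0 x))
        + ((a:ℂ)^4 * (Dc u 0 x * (starRingEnd ℂ) (Dc u 0 x))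
          + (Complex.I*(a:ℂ)*(R:ℂ)) * (-((V x : ℂ) * (Dc u 2 x * (starRingEnd ℂ) (Dc u 0 x)))
            + ((a:ℂ)^2 * ((V x : ℂ) * (Dc u 0 x * (starRingEnd ℂ) (Dc u 0 x)))
              + (Dr V 2 x : ℂ) * (Dc u 0 x * (starRingEnd ℂ) (Dc u 0 x))))))
      = lam * (-(Dc u 2 x * (starRingEnd ℂ) (Dc u 0 x))
          + (a:ℂ)^2 * (Dc u 0 x * (starRingEnd ℂ) (Dc u 0 x))) := by
    intro x hx
    rw [hDc0]
    linear_combination (starRingEnd ℂ) (u x) * heq x (le_of_lt hx)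
  have ig1 : Integrable (fun x => Dc u 4 x * (starRingEnd ℂ) (Dc u 0 x))
      (volume.restrict (Set.Ioi 0)) := hkey 4 0 le_rfl (by norm_num)
  have ig2 : Integrable (fun x => Dc u 2 x * (starRingEnd ℂ) (Dc u 0 x))
      (volume.restrict (Set.Ioi 0)) := hkey 2 0 (by norm_num) (by norm_num)
  have ig3 : Integrable (fun x => Dc u 0 x * (starRingEnd ℂ) (Dc u 0 x))
      (volume.restrict (Set.Ioi 0)) := hkey 0 0 (by norm_num) (by norm_num)
  have ig4 : Integrable (fun x => (V x : ℂ) * (Dc u 2 x * (starRingEnd ℂ) (Dc u 0 x)))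
      (volume.restrict (Set.Ioi 0)) := hbV _ ig2
  have ig5 : Integrable (fun x => (V x : ℂ) * (Dc u 0 x * (starRingEnd ℂ) (Dc u 0 x)))
      (volume.restrict (Set.Ioi 0)) := hbV _ ig3
  have iB : Integrable (fun x => (-2*(a:ℂ)^2) * (Dc u 2 x * (starRingEnd ℂ) (Dc u 0 x)))
      (volume.restrict (Set.Ioi 0)) := ig2.const_mul _
  have iC : Integrable (fun x => (a:ℂ)^4 * (Dc u 0 x * (starRingEnd ℂ) (Dc u 0 x)))
      (volume.restrict (Set.Ioi 0)) := ig3.const_mul _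
  have iD4 : Integrable (fun x => -((V x : ℂ) * (Dc u 2 x * (starRingEnd ℂ) (Dc u 0 x))))
      (volume.restrict (Set.Ioi 0)) := ig4.neg
  have iD5 : Integrable (fun x => (a:ℂ)^2 * ((V x : ℂ) * (Dc u 0 x * (starRingEnd ℂ) (Dc u 0 x))))
      (volume.restrict (Set.Ioi 0)) := ig5.const_mul _
  have iD56 : Integrable (fun x => (a:ℂ)^2 * ((V x : ℂ) * (Dc u 0 x * (starRingEnd ℂ) (Dc u 0 x)))
      + (Dr V 2 x : ℂ) * (Dc u 0 x * (starRingEnd ℂ) (Dc u 0 x)))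
      (volume.restrict (Set.Ioi 0)) := iD5.add g6int
  have iD456 : Integrable (fun x => -((V x : ℂ) * (Dc u 2 x * (starRingEnd ℂ) (Dc u 0 x)))
      + ((a:ℂ)^2 * ((V x : ℂ) * (Dc u 0 x * (starRingEnd ℂ) (Dc u 0 x)))
        + (Dr V 2 x : ℂ) * (Dc u 0 x * (starRingEnd ℂ) (Dc u 0 x))))
      (volume.restrict (Set.Ioi 0)) := iD4.add iD56
  have iD : Integrable (fun x => (Complex.I*(a:ℂ)*(R:ℂ))
      * (-((V x : ℂ) * (Dc u 2 x * (starRingEnd ℂ) (Dc u 0 x)))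
        + ((a:ℂ)^2 * ((V x : ℂ) * (Dc u 0 x * (starRingEnd ℂ) (Dc u 0 x)))
          + (Dr V 2 x : ℂ) * (Dc u 0 x * (starRingEnd ℂ) (Dc u 0 x)))))
      (volume.restrict (Set.Ioi 0)) := iD456.const_mul _
  have iCD : Integrable (fun x => (a:ℂ)^4 * (Dc u 0 x * (starRingEnd ℂ) (Dc u 0 x))
      + (Complex.I*(a:ℂ)*(R:ℂ)) * (-((V x : ℂ) * (Dc u 2 x * (starRingEnd ℂ) (Dc u 0 x)))
        + ((a:ℂ)^2 * ((V x : ℂ) * (Dc u 0 x * (starRingEnd ℂ) (Dc u 0 x)))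
          + (Dr V 2 x : ℂ) * (Dc u 0 x * (starRingEnd ℂ) (Dc u 0 x)))))
      (volume.restrict (Set.Ioi 0)) := iC.add iD
  have iBCD : Integrable (fun x => (-2*(a:ℂ)^2) * (Dc u 2 x * (starRingEnd ℂ) (Dc u 0 x))
      + ((a:ℂ)^4 * (Dc u 0 x * (starRingEnd ℂ) (Dc u 0 x))
        + (Complex.I*(a:ℂ)*(R:ℂ)) * (-((V x : ℂ) * (Dc u 2 x * (starRingEnd ℂ) (Dc u 0 x)))
          + ((a:ℂ)^2 * ((V x : ℂ) * (Dc u 0 x * (starRingEnd ℂ) (Dc u 0 x)))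
            + (Dr V 2 x : ℂ) * (Dc u 0 x * (starRingEnd ℂ) (Dc u 0 x))))))
      (volume.restrict (Set.Ioi 0)) := iB.add iCD
  have iE1 : Integrable (fun x => -(Dc u 2 x * (starRingEnd ℂ) (Dc u 0 x)))
      (volume.restrict (Set.Ioi 0)) := ig2.neg
  have iE2 : Integrable (fun x => (a:ℂ)^2 * (Dc u 0 x * (starRingEnd ℂ) (Dc u 0 x)))
      (volume.restrict (Set.Ioi 0)) := ig3.const_mul _
  have hIeq := setIntegral_congr_fun (μ := volume) measurableSet_Ioi hpt
  rw [integral_add ig1 iBCD, integral_add iB iCD, integral_add iC iD,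
    integral_const_mul ((-2:ℂ)*(a:ℂ)^2), integral_const_mul ((a:ℂ)^4),
    integral_const_mul (Complex.I*(a:ℂ)*(R:ℂ)), integral_add iD4 iD56,
    integral_neg, integral_add iD5 g6int,
    integral_const_mul ((a:ℂ)^2)
      (fun x => (V x : ℂ) * (Dc u 0 x * (starRingEnd ℂ) (Dc u 0 x))),
    integral_const_mul lam, integral_add iE1 iE2, integral_neg,
    integral_const_mul ((a:ℂ)^2)
      (fun x => Dc u 0 x * (starRingEnd ℂ) (Dc u 0 x)),
    hA40, hA20, hA00, hB4, hB5, hB6] at hIeq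
  -- imaginary part
  have hIm : a*R*(sv1 + a^2*sv0 + w2 + C1.re) = lam.im * (i1 + a^2*i0) := by
    have him := congrArg Complex.im hIeq
    simp [Complex.add_im, Complex.mul_im, Complex.mul_re, Complex.add_re,
      Complex.neg_re, Complex.neg_im, Complex.sub_re, Complex.sub_im,
      Complex.I_re, Complex.I_im, ← Complex.ofReal_pow,
      Complex.ofReal_re, Complex.ofReal_im] at him
    linear_combination him
  -- integrability of squares
  have nsq : ∀ n : ℕ, n ≤ 4 → Integrable (fun x => ‖Dc u n x‖^2) (volume.restrict (Set.Ioi 0)) :=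
    fun n hn => (memLp_two_iff_integrable_sq_norm (hM n hn).1).mp (hM n hn)
  have smVr : AEStronglyMeasurable V (volume.restrict (Set.Ioi 0)) := by
    have := hvc 0 (by norm_num); rw [hDr0] at this
    exact (this.mono Ioi_subset_Ici_self).aestronglyMeasurable measurableSet_Ioi
  -- i0 > 0
  have hx₀pos : 0 < x₀ := lt_of_le_of_ne hx₀0 (by rintro rfl; exact hux₀ hu0)
  have hi0pos : 0 < i0 := by
    have hcu : ContinuousAt (fun x => ‖Dc u 0 x‖^2) x₀ := by
      have h0 : ContinuousOn (Dc u 0) (Set.Ici 0) := huc 0 (by norm_num)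
      exact ((h0.continuousAt (Ici_mem_nhds hx₀pos)).norm).pow 2
    have hval : (0:ℝ) < ‖Dc u 0 x₀‖^2 := by
      rw [hDc0]; exact pow_pos (norm_pos_iff.mpr hux₀) 2
    have hev : ∀ᶠ x in 𝓝 x₀, ‖Dc u 0 x₀‖^2/2 < ‖Dc u 0 x‖^2 :=
      hcu.eventually_const_lt (by linarith)
    obtain ⟨δ, hδpos, hδ⟩ := Metric.eventually_nhds_iff.mp hev
    set c : ℝ := max (x₀ - δ/2) (x₀/2) with hcdef
    have hc0 : 0 < c := lt_max_of_lt_right (by linarith)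
    have hcx : c < x₀ := max_lt (by linarith) (by linarith)
    have hsub : Set.Ioc c x₀ ⊆ Set.Ioi 0 := fun y hy => lt_trans hc0 hy.1
    have hlow : ∀ y ∈ Set.Ioc c x₀, ‖Dc u 0 x₀‖^2/2 ≤ ‖Dc u 0 y‖^2 := by
      intro y hy
      refine le_of_lt (hδ ?_)
      rw [Real.dist_eq, abs_lt]
      have h1 : x₀ - δ/2 ≤ c := le_max_left _ _
      constructor <;> [linarith [hy.1]; linarith [hy.2]]
    have hint : IntegrableOn (fun x => ‖Dc u 0 x‖^2) (Set.Ioc c x₀) :=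
      MeasureTheory.IntegrableOn.mono_set (nsq 0 (by norm_num)) hsub
    have h1 : ‖Dc u 0 x₀‖^2/2 * (volume (Set.Ioc c x₀)).toReal
        ≤ ∫ x in Set.Ioc c x₀, ‖Dc u 0 x‖^2 :=
      by have := setIntegral_ge_of_const_le measurableSet_Ioc (measure_Ioc_lt_top).ne hlow hint
         rwa [smul_eq_mul, mul_comm, measureReal_def] at this
    have h2 : (∫ x in Set.Ioc c x₀, ‖Dc u 0 x‖^2) ≤ i0 := by
      rw [hi0def]
      refine setIntegral_mono_set (nsq 0 (by norm_num)) ?_ (HasSubset.Subset.eventuallyLE hsub)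
      exact Filter.Eventually.of_forall fun x => by positivity
    have h3 : (volume (Set.Ioc c x₀)).toReal = x₀ - c := by
      rw [Real.volume_Ioc, ENNReal.toReal_ofReal (by linarith)]
    nlinarith [h1, h2, h3, hval, hcx]
  have hi1nn : 0 ≤ i1 := by
    rw [hi1def]; exact integral_nonneg fun x => by positivity
  have hNpos : 0 < i1 + a^2*i0 := by nlinarith [sq_nonneg a, mul_pos (mul_pos ha ha) hi0pos]
  -- bounds on sv1, sv0
  have isv1 : Integrable (fun x => V x * ‖Dc u 1 x‖^2) (volume.restrict (Set.Ioi 0)) := by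
    refine (nsq 1 (by norm_num)).bdd_mul (c := CV) smVr ?_
    rw [ae_restrict_iff' measurableSet_Ioi]
    exact Filter.Eventually.of_forall fun x hx => by
      simpa [Real.norm_eq_abs] using hCV x (le_of_lt hx)
  have isv0 : Integrable (fun x => V x * ‖Dc u 0 x‖^2) (volume.restrict (Set.Ioi 0)) := by
    refine (nsq 0 (by norm_num)).bdd_mul (c := CV) smVr ?_
    rw [ae_restrict_iff' measurableSet_Ioi]
    exact Filter.Eventually.of_forall fun x hx => by
      simpa [Real.norm_eq_abs] using hCV x (le_of_lt hx)
  have hub : ∀ c : ℝ, (∀ x : ℝ, 0 ≤ x → V x ≤ c) → sv1 + a^2*sv0 ≤ c*(i1 + a^2*i0) := by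
    intro c hc
    have h1 : sv1 ≤ c*i1 := by
      rw [hsv1def, hi1def, ← integral_const_mul]
      refine integral_mono_ae isv1 ((nsq 1 (by norm_num)).const_mul c) ?_
      rw [Filter.EventuallyLE, ae_restrict_iff' measurableSet_Ioi]
      exact Filter.Eventually.of_forall fun x hx =>
        mul_le_mul_of_nonneg_right (hc x (le_of_lt hx)) (by positivity)
    have h0 : sv0 ≤ c*i0 := by
      rw [hsv0def, hi0def, ← integral_const_mul]
      refine integral_mono_ae isv0 ((nsq 0 (by norm_num)).const_mul c) ?_
      rw [Filter.EventuallyLE, ae_restrict_iff' measurableSet_Ioi]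
      exact Filter.Eventually.of_forall fun x hx =>
        mul_le_mul_of_nonneg_right (hc x (le_of_lt hx)) (by positivity)
    nlinarith [sq_nonneg a]
  have hlb : Vmin*(i1 + a^2*i0) ≤ sv1 + a^2*sv0 := by
    have h1 : Vmin*i1 ≤ sv1 := by
      rw [hsv1def, hi1def, ← integral_const_mul]
      refine integral_mono_ae ((nsq 1 (by norm_num)).const_mul Vmin) isv1 ?_
      rw [Filter.EventuallyLE, ae_restrict_iff' measurableSet_Ioi]
      exact Filter.Eventually.of_forall fun x hx =>
        mul_le_mul_of_nonneg_right ((hVbd x (le_of_lt hx)).1) (by positivity)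
    have h0 : Vmin*i0 ≤ sv0 := by
      rw [hsv0def, hi0def, ← integral_const_mul]
      refine integral_mono_ae ((nsq 0 (by norm_num)).const_mul Vmin) isv0 ?_
      rw [Filter.EventuallyLE, ae_restrict_iff' measurableSet_Ioi]
      exact Filter.Eventually.of_forall fun x hx =>
        mul_le_mul_of_nonneg_right ((hVbd x (le_of_lt hx)).1) (by positivity)
    nlinarith [sq_nonneg a]
  -- w2 ≤ 0
  have hW2 : w2 ≤ 0 := by
    rw [hw2def]
    refine integral_nonpos_of_ae ?_
    rw [Filter.EventuallyLE, ae_restrict_iff' measurableSet_Ioi]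
    refine Filter.Eventually.of_forall fun x hx => ?_
    exact mul_nonpos_of_nonpos_of_nonneg (hV'' x (le_of_lt hx)) (by positivity)
  -- bound on C1.re
  have hC1int : Integrable (fun x => (Dr V 1 x : ℂ) * (Dc u 1 x * (starRingEnd ℂ) (Dc u 0 x)))
      (volume.restrict (Set.Ioi 0)) := hbV1 _ (hkey 1 0 (by norm_num) (by norm_num))
  have hc1r : C1.re ≤ K/(2*a)*(i1 + a^2*i0) := by
    have hre : C1.re = ∫ x in Set.Ioi (0:ℝ),
        ((Dr V 1 x : ℂ) * (Dc u 1 x * (starRingEnd ℂ) (Dc u 0 x))).re := by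
      rw [hC1def]; exact (integral_re hC1int).symm
    rw [hre]
    have hRHS : K/(2*a)*(i1 + a^2*i0) = ∫ x in Set.Ioi (0:ℝ),
        K/(2*a) * (‖Dc u 1 x‖^2 + a^2*‖Dc u 0 x‖^2) := by
      rw [integral_const_mul, integral_add (nsq 1 (by norm_num))
        ((nsq 0 (by norm_num)).const_mul _), integral_const_mul, hi1def, hi0def]
    rw [hRHS]
    refine integral_mono_ae hC1int.re
      (((nsq 1 (by norm_num)).add ((nsq 0 (by norm_num)).const_mul _)).const_mul _) ?_
    rw [Filter.EventuallyLE, ae_restrict_iff' measurableSet_Ioi]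
    refine Filter.Eventually.of_forall fun x hx => ?_
    have h1 : ((Dr V 1 x : ℂ) * (Dc u 1 x * (starRingEnd ℂ) (Dc u 0 x))).re
        ≤ |Dr V 1 x| * (‖Dc u 1 x‖ * ‖Dc u 0 x‖) := by
      calc ((Dr V 1 x : ℂ) * (Dc u 1 x * (starRingEnd ℂ) (Dc u 0 x))).re
          ≤ ‖(Dr V 1 x : ℂ) * (Dc u 1 x * (starRingEnd ℂ) (Dc u 0 x))‖ :=
            Complex.re_le_norm _
        _ = |Dr V 1 x| * (‖Dc u 1 x‖ * ‖Dc u 0 x‖) := by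
            rw [norm_mul, norm_mul, Complex.norm_real, RCLike.norm_conj, Real.norm_eq_abs]
    have h2 : |Dr V 1 x| * (‖Dc u 1 x‖ * ‖Dc u 0 x‖) ≤ K * (‖Dc u 1 x‖ * ‖Dc u 0 x‖) :=
      mul_le_mul_of_nonneg_right (hV'bd x (le_of_lt hx)) (by positivity)
    have h3 : K * (‖Dc u 1 x‖ * ‖Dc u 0 x‖) ≤ K/(2*a) * (‖Dc u 1 x‖^2 + a^2*‖Dc u 0 x‖^2) := by
      rw [div_mul_eq_mul_div, le_div_iff₀ (by linarith)]
      nlinarith [mul_nonneg hK0 (sq_nonneg (‖Dc u 1 x‖ - a*‖Dc u 0 x‖))]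
    linarith
  -- final assembly
  have hmain2 : lam.im * (i1 + a^2*i0) = a*R*(sv1 + a^2*sv0 - C1.re) := by
    linear_combination -hIm + (a*R)*hw2re
  have hupper : ∀ c : ℝ, (∀ x : ℝ, 0 ≤ x → V x ≤ c) → lam.im ≤ a*R*c := by
    intro c hc
    have hx : sv1 + a^2*sv0 + w2/2 ≤ c*(i1 + a^2*i0) := by
      have := hub c hc; linarith
    have heq2 : lam.im * (i1 + a^2*i0) = a*R*(sv1 + a^2*sv0 + w2/2) := by
      linear_combination -hIm + (a*R/2)*hw2re
    have h2 : lam.im * (i1 + a^2*i0) ≤ (a*R*c) * (i1 + a^2*i0) := by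
      calc lam.im * (i1 + a^2*i0) = a*R*(sv1 + a^2*sv0 + w2/2) := heq2
        _ ≤ a*R*(c*(i1 + a^2*i0)) :=
          mul_le_mul_of_nonneg_left hx (by positivity)
        _ = (a*R*c) * (i1 + a^2*i0) := by ring
    exact le_of_mul_le_mul_right h2 hNpos
  have hlower : a*R*Vmin - R/2*K ≤ lam.im := by
    have hy : Vmin*(i1 + a^2*i0) - K/(2*a)*(i1 + a^2*i0) ≤ sv1 + a^2*sv0 - C1.re := by
      linarith
    have h2 : (a*R*Vmin - R/2*K) * (i1 + a^2*i0) ≤ lam.im * (i1 + a^2*i0) := by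
      calc (a*R*Vmin - R/2*K) * (i1 + a^2*i0)
          = a*R*(Vmin*(i1 + a^2*i0) - K/(2*a)*(i1 + a^2*i0)) := by
            field_simp
        _ ≤ a*R*(sv1 + a^2*sv0 - C1.re) :=
          mul_le_mul_of_nonneg_left hy (by positivity)
        _ = lam.im * (i1 + a^2*i0) := hmain2.symm
    exact le_of_mul_le_mul_right h2 hNpos
  refine ⟨⟨hlower, hupper Vmax fun x hx => (hVbd x hx).2⟩, fun hle1 => ?_⟩
  have := hupper 1 hle1
  linarith
end

section
/- Let a > 0, let K ≥ 0, and let V : [0,∞) → ℝ be twice continuously differentiable with V'' ≤ 0 on [0,∞), bounded, with |V'| ≤ K. Let u : [0,∞) → ℂ be continuously differentiable, not identically zero, with u, u' in L²(0,∞) and u(0) = 0, and set β₃ := (∫₀^∞ V'(x) u(x) conj(u'(x)) dx) / (∫₀^∞ (|u'(x)|² + a²|u(x)|²) dx). Then Re β₃ ≥ 0 and |β₃| ≤ K/(2a); i.e., β₃ lies in the set (K/(2a))·{ z ∈ ℂ : |z| ≤ 1, Re z ≥ 0 }. -/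
open MeasureTheory Set Complex

/-- If `V'' ≤ 0` and `|V'| ≤ K`, the quotient
`β₃ = ⟨V'u, u'⟩ / (‖u'‖² + a²‖u‖²)` satisfies `Re β₃ ≥ 0` and `|β₃| ≤ K/(2a)`, i.e.
`β₃ ∈ (K/(2a))·{z : |z| ≤ 1, Re z ≥ 0}`. -/
theorem os_beta3_enclosure
    (a K : ℝ) (ha : 0 < a) (hK : 0 ≤ K)
    (V : ℝ → ℝ) (hV : ContDiffOn ℝ 2 V (Set.Ici 0))
    (hVbd : ∃ C : ℝ, ∀ x : ℝ, 0 ≤ x → |V x| ≤ C ∧ |Dr V 2 x| ≤ C)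
    (hV'' : ∀ x : ℝ, 0 ≤ x → Dr V 2 x ≤ 0)
    (hV' : ∀ x : ℝ, 0 ≤ x → |Dr V 1 x| ≤ K)
    (u : ℝ → ℂ) (hu : ContDiffOn ℝ 1 u (Set.Ici 0))
    (hune : ∃ x : ℝ, 0 ≤ x ∧ u x ≠ 0)
    (huL2 : L2 u) (hu'L2 : L2 (Dc u 1)) (hu0 : u 0 = 0) :
    0 ≤ ((∫ x in Set.Ioi (0:ℝ), (Dr V 1 x : ℂ) * u x * (starRingEnd ℂ) (Dc u 1 x))
          / ((∫ x in Set.Ioi (0:ℝ), (‖Dc u 1 x‖^2 + a^2 * ‖u x‖^2) : ℝ) : ℂ)).re ∧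
    ‖(∫ x in Set.Ioi (0:ℝ), (Dr V 1 x : ℂ) * u x * (starRingEnd ℂ) (Dc u 1 x))
          / ((∫ x in Set.Ioi (0:ℝ), (‖Dc u 1 x‖^2 + a^2 * ‖u x‖^2) : ℝ) : ℂ)‖
        ≤ K / (2 * a) := by
  obtain ⟨C, hC⟩ := hVbd
  -- basic regularity
  have hucont : ContinuousOn u (Ici 0) := hu.continuousOn
  have hu'cont : ContinuousOn (Dc u 1) (Ici 0) :=
    hu.continuousOn_iteratedDerivWithin le_rfl (uniqueDiffOn_Ici 0)
  have hV'cont : ContinuousOn (Dr V 1) (Ici 0) :=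
    hV.continuousOn_iteratedDerivWithin (by norm_num) (uniqueDiffOn_Ici 0)
  have hV''cont : ContinuousOn (Dr V 2) (Ici 0) :=
    hV.continuousOn_iteratedDerivWithin le_rfl (uniqueDiffOn_Ici 0)
  have hderiv_u : ∀ x ∈ Ioi (0:ℝ), HasDerivAt u (Dc u 1 x) x := by
    intro x hx
    have hd : DifferentiableAt ℝ u x :=
      (hu.differentiableOn one_ne_zero).differentiableAt (Ici_mem_nhds hx)
    rw [show Dc u 1 x = iteratedDerivWithin 1 u (Ici 0) x from rfl,
      iteratedDerivWithin_one,
      derivWithin_of_mem_nhds (Ici_mem_nhds hx)]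
    exact hd.hasDerivAt
  have hderiv_V' : ∀ x ∈ Ioi (0:ℝ), HasDerivAt (Dr V 1) (Dr V 2 x) x := by
    intro x hx
    have hVIoi : ContDiffOn ℝ 2 V (Ioi 0) := hV.mono Ioi_subset_Ici_self
    have hdV : ContDiffOn ℝ 1 (deriv V) (Ioi 0) :=
      hVIoi.deriv_of_isOpen isOpen_Ioi (by norm_num)
    have hEq : ∀ y ∈ Ioi (0:ℝ), Dr V 1 y = deriv V y := by
      intro y hy
      rw [show Dr V 1 y = iteratedDerivWithin 1 V (Ici 0) y from rfl,
        iteratedDerivWithin_one,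
        derivWithin_of_mem_nhds (Ici_mem_nhds hy)]
    have hEqF : Dr V 1 =ᶠ[nhds x] deriv V :=
      Filter.eventuallyEq_of_mem (isOpen_Ioi.mem_nhds hx) hEq
    have hdiff : DifferentiableAt ℝ (deriv V) x :=
      (hdV.differentiableOn one_ne_zero).differentiableAt (isOpen_Ioi.mem_nhds hx)
    have h1 : HasDerivAt (Dr V 1) (deriv (deriv V) x) x :=
      hdiff.hasDerivAt.congr_of_eventuallyEq hEqF
    have h2 : Dr V 2 x = deriv (deriv V) x := by
      rw [show Dr V 2 x = iteratedDerivWithin (1+1) V (Ici 0) x from rfl,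
        iteratedDerivWithin_succ,
        derivWithin_of_mem_nhds (Ici_mem_nhds hx)]
      exact hEqF.deriv_eq
    rw [h2]; exact h1
  -- the squared norm function and its derivative
  set g : ℝ → ℝ := fun x => ‖u x‖^2 with hg_def
  set g' : ℝ → ℝ := fun x => 2 * (u x * (starRingEnd ℂ) (Dc u 1 x)).re with hg'_def
  have hderiv_g : ∀ x ∈ Ioi (0:ℝ), HasDerivAt g (g' x) x := by
    intro x hx
    have hdu := hderiv_u x hx
    have h1 : HasDerivAt (fun y => u y * (starRingEnd ℂ) (u y))
        (Dc u 1 x * (starRingEnd ℂ) (u x) + u x * (starRingEnd ℂ) (Dc u 1 x)) x :=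
      hdu.mul hdu.star
    have h2 : HasDerivAt (fun y => (u y * (starRingEnd ℂ) (u y)).re)
        ((Dc u 1 x * (starRingEnd ℂ) (u x) + u x * (starRingEnd ℂ) (Dc u 1 x)).re) x :=
      (Complex.reCLM.hasFDerivAt.comp_hasDerivAt x h1)
    have h3 : (fun y => (u y * (starRingEnd ℂ) (u y)).re) = g := by
      funext y
      rw [Complex.mul_conj, Complex.normSq_eq_norm_sq, Complex.ofReal_re]
    have h4 : (Dc u 1 x * (starRingEnd ℂ) (u x) + u x * (starRingEnd ℂ) (Dc u 1 x)).re
        = g' x := by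
      have : Dc u 1 x * (starRingEnd ℂ) (u x)
          = (starRingEnd ℂ) (u x * (starRingEnd ℂ) (Dc u 1 x)) := by
        simp [map_mul, mul_comm]
      rw [Complex.add_re, this, Complex.conj_re, hg'_def]; ring
    rw [← h3, ← h4]; exact h2
  -- measurability and integrability
  have hmeas_u : AEStronglyMeasurable u (volume.restrict (Ioi 0)) := huL2.1
  have hmeas_u' : AEStronglyMeasurable (Dc u 1) (volume.restrict (Ioi 0)) := hu'L2.1
  have hmeas_V' : AEStronglyMeasurable (Dr V 1) (volume.restrict (Ioi 0)) :=
    (hV'cont.mono Ioi_subset_Ici_self).aestronglyMeasurable measurableSet_Ioi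
  have hmeas_V'' : AEStronglyMeasurable (Dr V 2) (volume.restrict (Ioi 0)) :=
    (hV''cont.mono Ioi_subset_Ici_self).aestronglyMeasurable measurableSet_Ioi
  have hInt_u2 : IntegrableOn (fun x => ‖u x‖^2) (Ioi 0) volume :=
    (memLp_two_iff_integrable_sq_norm hmeas_u).1 huL2
  have hInt_u'2 : IntegrableOn (fun x => ‖Dc u 1 x‖^2) (Ioi 0) volume :=
    (memLp_two_iff_integrable_sq_norm hmeas_u').1 hu'L2
  have hmeas_cu' : AEStronglyMeasurable (fun x => (starRingEnd ℂ) (Dc u 1 x))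
      (volume.restrict (Ioi 0)) :=
    Complex.continuous_conj.comp_aestronglyMeasurable hmeas_u'
  have hInt_uu' : IntegrableOn (fun x => u x * (starRingEnd ℂ) (Dc u 1 x)) (Ioi 0) volume := by
    refine Integrable.mono' ((hInt_u2.add hInt_u'2).div_const 2)
      (hmeas_u.mul hmeas_cu') (Filter.Eventually.of_forall fun x => ?_)
    simp only [Pi.add_apply]
    rw [norm_mul, RCLike.norm_conj]
    nlinarith [sq_nonneg (‖u x‖ - ‖Dc u 1 x‖), norm_nonneg (u x), norm_nonneg (Dc u 1 x)]
  have hInt_g' : IntegrableOn g' (Ioi 0) volume := by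
    have := hInt_uu'.re
    exact (this.const_mul 2)
  have hInt_I : IntegrableOn (fun x => (Dr V 1 x : ℂ) * u x * (starRingEnd ℂ) (Dc u 1 x))
      (Ioi 0) volume := by
    refine Integrable.mono' (hInt_uu'.norm.const_mul K)
      (((Complex.continuous_ofReal.comp_aestronglyMeasurable hmeas_V').mul hmeas_u).mul hmeas_cu')
      ?_
    filter_upwards [ae_restrict_mem measurableSet_Ioi] with x hx
    rw [mul_assoc, norm_mul, Complex.norm_real]
    exact mul_le_mul_of_nonneg_right (hV' x (le_of_lt hx)) (norm_nonneg _)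
  have hIntN : IntegrableOn (fun x => ‖Dc u 1 x‖^2 + a^2 * ‖u x‖^2) (Ioi 0) volume :=
    hInt_u'2.add (hInt_u2.const_mul (a^2))
  -- positivity of the denominator
  set N : ℝ := ∫ x in Set.Ioi (0:ℝ), (‖Dc u 1 x‖^2 + a^2 * ‖u x‖^2) with hN_def
  have hNpos : 0 < N := by
    obtain ⟨x₀, hx₀0, hx₀⟩ := hune
    have hx₀pos : 0 < x₀ := by
      rcases lt_or_eq_of_le hx₀0 with h | h
      · exact h
      · exact absurd (h ▸ hu0) hx₀
    set c : ℝ := ‖u x₀‖^2 with hc_def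
    have hcpos : 0 < c := pow_pos (norm_pos_iff.mpr hx₀) 2
    have hcontAt : ContinuousAt (fun y => ‖u y‖^2) x₀ :=
      ((hucont.continuousAt (Ici_mem_nhds hx₀pos)).norm.pow 2)
    have hev : ∀ᶠ y in nhds x₀, c/2 < ‖u y‖^2 :=
      hcontAt.eventually (eventually_gt_nhds (by rw [hc_def] at hcpos ⊢; linarith))
    obtain ⟨ε, hε, hball⟩ := Metric.eventually_nhds_iff.1 hev
    set x₁ : ℝ := x₀ + min (ε/2) 1 with hx₁_def
    have hmin : 0 < min (ε/2) 1 := by positivity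
    have hx₁ : x₀ < x₁ := by simp [hx₁_def]; linarith
    have hsub : Ioc x₀ x₁ ⊆ Ioi (0:ℝ) := fun y hy => lt_trans hx₀pos hy.1
    have hlow : ∀ y ∈ Ioc x₀ x₁, a^2 * (c/2) ≤ ‖Dc u 1 y‖^2 + a^2 * ‖u y‖^2 := by
      intro y hy
      have hdist : dist y x₀ < ε := by
        have hy0 : 0 ≤ y - x₀ := by linarith [hy.1.le]
        rw [Real.dist_eq, _root_.abs_of_nonneg hy0]
        have := hy.2
        have h1 : min (ε/2) 1 ≤ ε/2 := min_le_left _ _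
        simp only [hx₁_def] at this
        linarith
      have := hball hdist
      nlinarith [sq_nonneg ‖Dc u 1 y‖, sq_nonneg a]
    have h1 : a^2 * (c/2) * (volume (Ioc x₀ x₁)).toReal
        ≤ ∫ y in Ioc x₀ x₁, (‖Dc u 1 y‖^2 + a^2 * ‖u y‖^2) :=
      setIntegral_ge_of_const_le_real measurableSet_Ioc (by simp)
        hlow (hIntN.mono_set hsub)
    have h2 : (0:ℝ) < a^2 * (c/2) * (volume (Ioc x₀ x₁)).toReal := by
      rw [Real.volume_Ioc, ENNReal.toReal_ofReal (by linarith)]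
      have : 0 < x₁ - x₀ := by linarith
      positivity
    have h3 : ∫ y in Ioc x₀ x₁, (‖Dc u 1 y‖^2 + a^2 * ‖u y‖^2)
        ≤ N := by
      refine setIntegral_mono_set hIntN ?_ (HasSubset.Subset.eventuallyLE hsub)
      filter_upwards with y
      positivity
    linarith
  -- the function φ = V' * g and integration by parts
  set φ : ℝ → ℝ := fun x => Dr V 1 x * g x with hφ_def
  set φ' : ℝ → ℝ := fun x => Dr V 2 x * g x + Dr V 1 x * g' x with hφ'_def
  have hderiv_φ : ∀ x ∈ Ioi (0:ℝ), HasDerivAt φ (φ' x) x :=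
    fun x hx => (hderiv_V' x hx).mul (hderiv_g x hx)
  have hmeas_g : AEStronglyMeasurable g (volume.restrict (Ioi 0)) :=
    (((hucont.mono Ioi_subset_Ici_self).norm.pow 2)).aestronglyMeasurable measurableSet_Ioi
  have hInt_φ'1 : IntegrableOn (fun x => Dr V 2 x * g x) (Ioi 0) volume := by
    refine Integrable.mono' (hInt_u2.const_mul C) (hmeas_V''.mul hmeas_g) ?_
    filter_upwards [ae_restrict_mem measurableSet_Ioi] with x hx
    have h1 : |Dr V 2 x| ≤ C := (hC x hx.le).2
    have h2 : 0 ≤ g x := sq_nonneg _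
    rw [Real.norm_eq_abs, _root_.abs_mul, _root_.abs_of_nonneg h2]
    have h3 : g x = ‖u x‖^2 := rfl
    rw [h3]
    exact mul_le_mul_of_nonneg_right h1 (sq_nonneg _)
  have hInt_φ'2 : IntegrableOn (fun x => Dr V 1 x * g' x) (Ioi 0) volume := by
    refine Integrable.mono' (hInt_g'.norm.const_mul K)
      (hmeas_V'.mul hInt_g'.aestronglyMeasurable) ?_
    filter_upwards [ae_restrict_mem measurableSet_Ioi] with x hx
    rw [Real.norm_eq_abs, _root_.abs_mul]
    exact mul_le_mul_of_nonneg_right (hV' x hx.le) (abs_nonneg _)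
  have hInt_φ' : IntegrableOn φ' (Ioi 0) volume := hInt_φ'1.add hInt_φ'2
  -- limit of g at infinity
  have hInt_g'1 : IntegrableOn g' (Ioi 1) volume :=
    hInt_g'.mono_set (fun t ht => mem_Ioi.2 (lt_trans zero_lt_one ht))
  have hFTC : ∀ x : ℝ, 1 ≤ x → ∫ t in (1:ℝ)..x, g' t = g x - g 1 := by
    intro x hx
    refine intervalIntegral.integral_eq_sub_of_hasDerivAt ?_ ?_
    · intro t ht
      rw [uIcc_of_le hx] at ht
      exact hderiv_g t (lt_of_lt_of_le zero_lt_one ht.1)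
    · refine (hInt_g'.mono_set ?_).intervalIntegrable
      rw [uIcc_of_le hx]
      exact fun t ht => lt_of_lt_of_le zero_lt_one ht.1
  have htend_int : Filter.Tendsto (fun x : ℝ => ∫ t in (1:ℝ)..x, g' t)
      Filter.atTop (nhds (∫ t in Ioi (1:ℝ), g' t)) :=
    intervalIntegral_tendsto_integral_Ioi 1 hInt_g'1 Filter.tendsto_id
  have hgxL : Filter.Tendsto g Filter.atTop (nhds (g 1 + ∫ t in Ioi (1:ℝ), g' t)) := by
    have h1 : Filter.Tendsto (fun x : ℝ => g 1 + ∫ t in (1:ℝ)..x, g' t)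
        Filter.atTop (nhds (g 1 + ∫ t in Ioi (1:ℝ), g' t)) :=
      tendsto_const_nhds.add htend_int
    refine h1.congr' ?_
    filter_upwards [Filter.eventually_ge_atTop 1] with x hx
    rw [hFTC x hx]; ring
  have hL0 : g 1 + ∫ t in Ioi (1:ℝ), g' t = 0 := by
    set L : ℝ := g 1 + ∫ t in Ioi (1:ℝ), g' t with hLdef
    by_contra hL
    have hLnonneg : 0 ≤ L := ge_of_tendsto' hgxL (fun x => sq_nonneg _)
    have hLpos : 0 < L := lt_of_le_of_ne hLnonneg (Ne.symm hL)
    have hev2 : ∀ᶠ x in Filter.atTop, L/2 < g x :=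
      hgxL.eventually (eventually_gt_nhds (by linarith))
    obtain ⟨M, hM⟩ := Filter.eventually_atTop.1 hev2
    have hIOn : IntegrableOn (fun _ : ℝ => L/2) (Ioi (max M 1)) volume := by
      refine Integrable.mono' (hInt_u2.mono_set ?_) aestronglyMeasurable_const ?_
      · exact fun t ht => lt_of_lt_of_le zero_lt_one (le_trans (le_max_right M 1) ht.le)
      · filter_upwards [ae_restrict_mem measurableSet_Ioi] with x hx
        have h1 := hM x (le_trans (le_max_left M 1) hx.le)
        rw [Real.norm_eq_abs, _root_.abs_of_pos (by linarith)]
        have : g x = ‖u x‖^2 := rfl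
        linarith [this ▸ h1]
    rcases integrable_const_iff.1 hIOn with h | h
    · exact absurd h (by intro hcontra; linarith)
    · have h := @IsFiniteMeasure.measure_univ_lt_top _ _ _ h
      rw [Measure.restrict_apply_univ, Real.volume_Ioi] at h
      exact absurd h (by simp)
  have hgtend0 : Filter.Tendsto g Filter.atTop (nhds 0) := by
    rw [hL0] at hgxL; exact hgxL
  -- limit of φ at infinity and at 0
  have hφtend : Filter.Tendsto φ Filter.atTop (nhds 0) := by
    have hKg : Filter.Tendsto (fun x => K * g x) Filter.atTop (nhds 0) := by
      simpa using hgtend0.const_mul K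
    have hKgneg : Filter.Tendsto (fun x => -(K * g x)) Filter.atTop (nhds 0) := by
      simpa using hKg.neg
    refine tendsto_of_tendsto_of_tendsto_of_le_of_le' hKgneg hKg ?_ ?_
    · filter_upwards [Filter.eventually_gt_atTop 0] with x hx
      have h1 := abs_le.1 (hV' x hx.le)
      have h2 : 0 ≤ g x := sq_nonneg _
      have h3 : φ x = Dr V 1 x * g x := rfl
      rw [h3]
      nlinarith [mul_le_mul_of_nonneg_right h1.1 h2]
    · filter_upwards [Filter.eventually_gt_atTop 0] with x hx
      have h1 := abs_le.1 (hV' x hx.le)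
      have h2 : 0 ≤ g x := sq_nonneg _
      have h3 : φ x = Dr V 1 x * g x := rfl
      rw [h3]
      nlinarith [mul_le_mul_of_nonneg_right h1.2 h2]
  have hg_cont : ContinuousOn g (Ici 0) := (hucont.norm.pow 2)
  have hφcont0 : ContinuousWithinAt φ (Ici 0) 0 :=
    (hV'cont.mul hg_cont) 0 (mem_Ici.mpr le_rfl)
  have hparts : ∫ x in Ioi (0:ℝ), φ' x = 0 - φ 0 :=
    integral_Ioi_of_hasDerivAt_of_tendsto hφcont0 hderiv_φ hInt_φ' hφtend
  have hφ0 : φ 0 = 0 := by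
    have : g 0 = 0 := by simp [hg_def, hu0]
    simp [hφ_def, this]
  have hsplit : ∫ x in Ioi (0:ℝ), φ' x
      = (∫ x in Ioi (0:ℝ), Dr V 2 x * g x) + ∫ x in Ioi (0:ℝ), Dr V 1 x * g' x :=
    integral_add hInt_φ'1 hInt_φ'2
  have hterm1 : ∫ x in Ioi (0:ℝ), Dr V 2 x * g x ≤ 0 := by
    refine integral_nonpos_of_ae ?_
    filter_upwards [ae_restrict_mem measurableSet_Ioi] with x hx
    exact mul_nonpos_of_nonpos_of_nonneg (hV'' x hx.le) (sq_nonneg _)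
  have hIg' : 0 ≤ ∫ x in Ioi (0:ℝ), Dr V 1 x * g' x := by
    rw [hφ0, hsplit] at hparts; linarith
  -- the numerator and its real part
  set I : ℂ := ∫ x in Set.Ioi (0:ℝ), (Dr V 1 x : ℂ) * u x * (starRingEnd ℂ) (Dc u 1 x)
    with hI_def
  have hIre0 : 0 ≤ I.re := by
    have h1 : ∫ x in Ioi (0:ℝ), ((Dr V 1 x : ℂ) * u x * (starRingEnd ℂ) (Dc u 1 x)).re
        = I.re := by
      have := integral_re (μ := volume.restrict (Ioi 0)) hInt_I
      simpa [RCLike.re_to_complex] using this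
    have h2 : (fun x => Dr V 1 x * g' x)
        = fun x => 2 * ((Dr V 1 x : ℂ) * u x * (starRingEnd ℂ) (Dc u 1 x)).re := by
      funext x
      rw [mul_assoc, Complex.re_ofReal_mul, hg'_def]
      ring
    rw [h2] at hIg'
    rw [integral_const_mul] at hIg'
    rw [← h1]
    linarith
  -- the norm bound
  have hnorm1 : ‖I‖ ≤ ∫ x in Ioi (0:ℝ), ‖(Dr V 1 x : ℂ) * u x * (starRingEnd ℂ) (Dc u 1 x)‖ :=
    norm_integral_le_integral_norm _
  have hnorm2 : ∫ x in Ioi (0:ℝ), ‖(Dr V 1 x : ℂ) * u x * (starRingEnd ℂ) (Dc u 1 x)‖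
      ≤ ∫ x in Ioi (0:ℝ), K/(2*a) * (‖Dc u 1 x‖^2 + a^2 * ‖u x‖^2) := by
    refine setIntegral_mono_on hInt_I.norm (hIntN.const_mul _) measurableSet_Ioi ?_
    intro x hx
    rw [norm_mul, norm_mul, Complex.norm_real, RCLike.norm_conj, Real.norm_eq_abs]
    rw [div_mul_eq_mul_div, le_div_iff₀ (by linarith : (0:ℝ) < 2*a)]
    have h1 : |Dr V 1 x| ≤ K := hV' x (le_of_lt hx)
    have h2 : |Dr V 1 x| * ‖u x‖ * ‖Dc u 1 x‖ ≤ K * (‖u x‖ * ‖Dc u 1 x‖) := by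
      rw [mul_assoc]
      exact mul_le_mul_of_nonneg_right h1
        (mul_nonneg (norm_nonneg _) (norm_nonneg _))
    have h3 : 0 ≤ K * (‖Dc u 1 x‖ - a * ‖u x‖)^2 :=
      mul_nonneg hK (sq_nonneg _)
    nlinarith [norm_nonneg (u x), norm_nonneg (Dc u 1 x)]
  have hnorm3 : ∫ x in Ioi (0:ℝ), K/(2*a) * (‖Dc u 1 x‖^2 + a^2 * ‖u x‖^2)
      = K/(2*a) * N := integral_const_mul _ _
  have hnormI : ‖I‖ ≤ K/(2*a) * N := by linarith
  -- conclusion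
  constructor
  · rw [Complex.div_ofReal_re]
    exact div_nonneg hIre0 hNpos.le
  · rw [norm_div, Complex.norm_real, Real.norm_eq_abs, _root_.abs_of_pos hNpos,
      div_le_iff₀ hNpos]
    exact hnormI
end

section
/- Let a > 0 and let μ ∈ ℂ with μ ∉ [0,∞). Then there exists a unique function w : [0,∞) → ℂ, twice continuously differentiable, with w, w', w'' in L²(0,∞), satisfying w(0) = 0 and −w''(x) − μ·w(x) = e^{−ax} for all x ≥ 0; and this w satisfies w'(0) ≠ 0. -/
open MeasureTheory Set Complex

/-- `w` solves `−w'' − μw = e^{−ax}` on `[0, ∞)` with `w(0) = 0`, `w, w', w'' ∈ L²`. -/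
def IsResolventSolution (a : ℝ) (μ : ℂ) (w : ℝ → ℂ) : Prop :=
  ContDiffOn ℝ 2 w (Set.Ici 0) ∧ L2 w ∧ L2 (Dc w 1) ∧ L2 (Dc w 2) ∧ w 0 = 0 ∧
  ∀ x : ℝ, 0 ≤ x → -(Dc w 2 x) - μ * w x = ((Real.exp (-(a * x)) : ℝ) : ℂ)



lemma hasDerivAt_cexp_mul (c : ℂ) (x : ℝ) :
    HasDerivAt (fun y : ℝ => Complex.exp (c * y)) (c * Complex.exp (c * x)) x := by
  have h1 : HasDerivAt (fun y : ℝ => (y : ℂ)) 1 x := by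
    simpa using (hasDerivAt_id x).ofReal_comp
  simpa [mul_comm] using (h1.const_mul c).cexp

lemma contDiff_cexp_mul (c : ℂ) : ContDiff ℝ ⊤ fun x : ℝ => Complex.exp (c * x) :=
  Complex.contDiff_exp.comp ((contDiff_const.mul Complex.ofRealCLM.contDiff))

lemma Dc_one_eq {f : ℝ → ℂ} (hf : ContDiff ℝ 2 f) {x : ℝ} (hx : x ∈ Ici (0:ℝ)) :
    Dc f 1 x = deriv f x := by
  rw [Dc, iteratedDerivWithin_one]
  exact ((hf.differentiable (by norm_num)) x).derivWithin ((uniqueDiffOn_Ici 0) x hx)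

lemma Dc_two_eq {f : ℝ → ℂ} (hf : ContDiff ℝ 2 f) {x : ℝ} (hx : x ∈ Ici (0:ℝ)) :
    Dc f 2 x = deriv (deriv f) x := by
  rw [Dc, show (2:ℕ) = 1+1 from rfl, iteratedDerivWithin_succ]
  have hd : ContDiff ℝ 1 (deriv f) := (contDiff_succ_iff_deriv.mp (by rw [one_add_one_eq_two]; exact hf)).2.2
  have h1 : EqOn (iteratedDerivWithin 1 f (Ici 0)) (deriv f) (Ici 0) := fun y hy => Dc_one_eq hf hy
  exact (derivWithin_congr h1 (Dc_one_eq hf hx)).trans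
    (((hd.differentiable one_ne_zero) x).derivWithin ((uniqueDiffOn_Ici 0) x hx))

lemma L2_of_sq_bound {f : ℝ → ℂ} (hf : Continuous f) {b : ℝ} (hb : 0 < b) (C : ℝ)
    (h : ∀ x : ℝ, 0 ≤ x → ‖f x‖^2 ≤ C * Real.exp (-b * x)) : L2 f := by
  rw [L2, memLp_two_iff_integrable_sq_norm (hf.aestronglyMeasurable.restrict)]
  refine Integrable.mono' ((exp_neg_integrableOn_Ioi 0 hb).const_mul C)
    ((hf.norm.pow 2).aestronglyMeasurable.restrict) ?_
  filter_upwards [ae_restrict_mem measurableSet_Ioi] with x hx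
  have := h x (le_of_lt hx)
  rwa [Real.norm_eq_abs, _root_.abs_of_nonneg (by positivity)]

lemma L2_cexp {c : ℂ} (hc : c.re < 0) : L2 (fun x : ℝ => Complex.exp (c * x)) := by
  refine L2_of_sq_bound (by fun_prop) (b := -2 * c.re) (by linarith) 1 (fun x hx => ?_)
  have hre : (c * (x:ℂ)).re = c.re * x := by simp [Complex.mul_re]
  rw [Complex.norm_exp, sq, ← Real.exp_add, hre, one_mul]
  apply le_of_eq; congr 1; ring

lemma L2_mul_cexp {a : ℝ} (ha : 0 < a) : L2 (fun x : ℝ => (x:ℂ) * Complex.exp ((-a : ℂ) * x)) := by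
  refine L2_of_sq_bound (by fun_prop) (b := a) ha (4/a^2) (fun x hx => ?_)
  have h1 : ‖(x:ℂ) * Complex.exp ((-a : ℂ) * x)‖ = x * Real.exp (-a * x) := by
    have hre : ((-a : ℂ) * x).re = -a * x := by
      rw [show ((-a:ℂ) * x) = ((-a*x : ℝ) : ℂ) by push_cast; ring, Complex.ofReal_re]
    rw [norm_mul, Complex.norm_exp, Complex.norm_real, Real.norm_eq_abs,
      _root_.abs_of_nonneg hx, hre]
  rw [h1]
  have h2 : x ≤ (2/a) * Real.exp ((a/2) * x) := by
    have := Real.add_one_le_exp ((a/2)*x)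
    have h3 : (a/2) * x ≤ Real.exp ((a/2)*x) := by linarith
    calc x = (2/a) * ((a/2) * x) := by field_simp
    _ ≤ (2/a) * Real.exp ((a/2)*x) := by
        apply mul_le_mul_of_nonneg_left h3 (by positivity)
  have h4 : (0:ℝ) ≤ x * Real.exp (-a*x) := by positivity
  calc (x * Real.exp (-a * x))^2 ≤ ((2/a) * Real.exp ((a/2) * x) * Real.exp (-a * x))^2 := by
        apply pow_le_pow_left₀ h4
        exact mul_le_mul_of_nonneg_right h2 (Real.exp_nonneg _)
  _ = 4/a^2 * Real.exp (-a * x) := by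
        have e1 : Real.exp ((a/2)*x)^2 = Real.exp (a*x) := by
          rw [sq, ← Real.exp_add]; congr 1; ring
        have e2 : Real.exp (-a*x)^2 = Real.exp (-(2*a)*x) := by
          rw [sq, ← Real.exp_add]; congr 1; ring
        rw [mul_pow, mul_pow, e1, e2, mul_assoc, ← Real.exp_add,
          show a*x + -(2*a)*x = -a*x by ring, div_pow]
        norm_num

lemma not_L2_of_ge {f : ℝ → ℂ} (hf : Continuous f) (X : ℝ) (hX : 0 ≤ X)
    (h : ∀ x : ℝ, X ≤ x → 1 ≤ ‖f x‖) : ¬ L2 f := by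
  intro hL
  rw [L2, memLp_two_iff_integrable_sq_norm (hf.aestronglyMeasurable.restrict)] at hL
  have h2 : Integrable (fun x => ‖f x‖^2) (volume.restrict (Ioi X)) :=
    hL.mono_measure (Measure.restrict_mono (Ioi_subset_Ioi hX) le_rfl)
  have h3 : Integrable (fun _ : ℝ => (1:ℝ)) (volume.restrict (Ioi X)) := by
    refine h2.mono' aestronglyMeasurable_const ?_
    filter_upwards [ae_restrict_mem measurableSet_Ioi] with x hx
    have h4 : 1 ≤ ‖f x‖ := h x (le_of_lt hx)
    have : (1:ℝ) ≤ ‖f x‖^2 := by nlinarith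
    rwa [norm_one]
  rw [show Integrable (fun _ : ℝ => (1:ℝ)) (volume.restrict (Ioi X)) = IntegrableOn (fun _ : ℝ => (1:ℝ)) (Ioi X) volume from rfl, integrableOn_const_iff] at h3
  rcases h3 with h3 | h3
  · norm_num at h3
  · rw [Real.volume_Ioi] at h3; exact lt_irrefl _ h3

lemma sinh_lower {k c : ℂ} (hk : 0 < k.re) (hc : c ≠ 0) :
    ∃ X : ℝ, 0 ≤ X ∧ ∀ x : ℝ, X ≤ x →
      1 ≤ ‖c / (2*k) * (Complex.exp (k * x) - Complex.exp ((-k) * x))‖ := by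
  have hk0 : k ≠ 0 := fun h => by simp [h] at hk
  have hnorm : 0 < ‖c / (2*k)‖ := by
    rw [norm_pos_iff]
    exact div_ne_zero hc (by simp [hk0])
  set M : ℝ := ‖c / (2*k)‖ with hM
  have hM2 : (0:ℝ) < 2/M := div_pos two_pos hnorm
  refine ⟨(1/k.re) * Real.log (1 + 2/M),
    mul_nonneg (by positivity) (Real.log_nonneg (by linarith)), fun x hx => ?_⟩
  have hxlog : Real.log (1 + 2/M) ≤ k.re * x := by
    rw [div_mul_eq_mul_div, div_le_iff₀ hk] at hx
    linarith [hx]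
  have h5 : 1 + 2/M ≤ Real.exp (k.re * x) := by
    calc 1 + 2/M = Real.exp (Real.log (1 + 2/M)) := by
          rw [Real.exp_log]; linarith
    _ ≤ Real.exp (k.re * x) := Real.exp_le_exp.mpr hxlog
  have hx0 : 0 ≤ x := by
    have h0 : (0:ℝ) ≤ (1/k.re) * Real.log (1 + 2/M) :=
      mul_nonneg (by positivity) (Real.log_nonneg (by linarith))
    linarith
  have h6 : Real.exp (k.re * x) - Real.exp (-(k.re * x)) ≥ 2/M := by
    have h7 : Real.exp (-(k.re * x)) ≤ 1 := by
      rw [Real.exp_le_one_iff]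
      nlinarith [hk.le]
    linarith
  have h8 : Real.exp (k.re * x) - Real.exp (-(k.re * x)) ≤
      ‖Complex.exp (k * x) - Complex.exp ((-k) * x)‖ := by
    have e1 : ‖Complex.exp (k * x)‖ = Real.exp (k.re * x) := by
      rw [Complex.norm_exp]; congr 1; simp [Complex.mul_re]
    have e2 : ‖Complex.exp ((-k) * x)‖ = Real.exp (-(k.re * x)) := by
      rw [Complex.norm_exp]; congr 1; simp [Complex.mul_re]
    calc Real.exp (k.re * x) - Real.exp (-(k.re * x))
        = ‖Complex.exp (k * x)‖ - ‖Complex.exp ((-k) * x)‖ := by rw [e1, e2]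
    _ ≤ ‖Complex.exp (k * x) - Complex.exp ((-k) * x)‖ := norm_sub_norm_le _ _
  rw [norm_mul, ← hM]
  have h9 : 2/M ≤ ‖Complex.exp (k * x) - Complex.exp ((-k) * x)‖ := le_trans h6 h8
  have h10 : M * (2/M) ≤ M * ‖Complex.exp (k * x) - Complex.exp ((-k) * x)‖ :=
    mul_le_mul_of_nonneg_left h9 hnorm.le
  have h11 : M * (2/M) = 2 := by field_simp
  linarith



lemma hasDerivAt_ofReal' (x : ℝ) : HasDerivAt (fun y : ℝ => (y : ℂ)) 1 x := by
  simpa using (hasDerivAt_id x).ofReal_comp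

lemma L2_congr {f g : ℝ → ℂ} (hf : L2 f) (h : ∀ x : ℝ, 0 ≤ x → f x = g x) : L2 g :=
  hf.ae_eq ((ae_restrict_mem measurableSet_Ioi).mono fun x hx => h x (le_of_lt hx))

lemma L2cmul {f : ℝ → ℂ} (hf : L2 f) (c : ℂ) : L2 (fun x => c * f x) :=
  MemLp.const_mul hf c

lemma L2sub {f g : ℝ → ℂ} (hf : L2 f) (hg : L2 g) : L2 (fun x => f x - g x) :=
  MemLp.sub hf hg

lemma L2add {f g : ℝ → ℂ} (hf : L2 f) (hg : L2 g) : L2 (fun x => f x + g x) :=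
  MemLp.add hf hg

lemma rhs_eq (a x : ℝ) : ((Real.exp (-(a * x)) : ℝ) : ℂ) = Complex.exp ((-a : ℂ) * x) := by
  rw [Complex.ofReal_exp]; congr 1; push_cast; ring

lemma exists_nonres (a : ℝ) (ha : 0 < a) (μ k : ℂ) (hk2 : k^2 = -μ) (hkre : 0 < k.re)
    (hres : (a:ℂ)^2 + μ ≠ 0) :
    ∃ w : ℝ → ℂ, IsResolventSolution a μ w ∧ Dc w 1 0 ≠ 0 := by
  set d : ℂ := -((a:ℂ)^2 + μ)⁻¹ with hd_def
  have hd0 : d ≠ 0 := by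
    rw [hd_def]; simpa using inv_ne_zero hres
  have hdmul : d * ((a:ℂ)^2 + μ) = -1 := by
    rw [hd_def]; field_simp
  set w : ℝ → ℂ := fun x => d * (Complex.exp ((-a:ℂ) * x) - Complex.exp ((-k) * x)) with hw
  have hsmooth : ContDiff ℝ 2 w :=
    (contDiff_const.mul ((contDiff_cexp_mul (-a)).sub (contDiff_cexp_mul (-k)))).of_le le_top
  have hderiv1 : deriv w = fun x : ℝ =>
      d * ((-a:ℂ) * Complex.exp ((-a:ℂ)*x) - (-k) * Complex.exp ((-k)*x)) :=
    funext fun x => (((hasDerivAt_cexp_mul (-a) x).sub (hasDerivAt_cexp_mul (-k) x)).const_mul d).deriv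
  have hderiv2 : deriv (deriv w) = fun x : ℝ =>
      d * ((-a:ℂ) * ((-a:ℂ) * Complex.exp ((-a:ℂ)*x)) - (-k) * ((-k) * Complex.exp ((-k)*x))) := by
    rw [hderiv1]
    exact funext fun x => ((((hasDerivAt_cexp_mul (-a) x).const_mul (-a:ℂ)).sub
      ((hasDerivAt_cexp_mul (-k) x).const_mul (-k))).const_mul d).deriv
  have hare : ((-a : ℂ)).re < 0 := by simp [ha]
  have hkre' : ((-k : ℂ)).re < 0 := by simp [hkre]
  have hL2w : L2 w := L2cmul (L2sub (L2_cexp hare) (L2_cexp hkre')) d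
  refine ⟨w, ⟨hsmooth.contDiffOn, hL2w, ?_, ?_, by simp [hw], ?_⟩, ?_⟩
  · refine L2_congr (L2cmul (L2sub (L2cmul (L2_cexp hare) (-a:ℂ))
      (L2cmul (L2_cexp hkre') (-k))) d) fun x hx => ?_
    rw [Dc_one_eq hsmooth hx, hderiv1]
  · refine L2_congr (L2cmul (L2sub (L2cmul (L2cmul (L2_cexp hare) (-a:ℂ)) (-a:ℂ))
      (L2cmul (L2cmul (L2_cexp hkre') (-k)) (-k))) d) fun x hx => ?_
    rw [Dc_two_eq hsmooth hx, hderiv2]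
  · intro x hx
    rw [Dc_two_eq hsmooth hx, hderiv2, rhs_eq, hw]
    beta_reduce
    set A := Complex.exp ((-a:ℂ)*x)
    set B := Complex.exp ((-k)*x)
    linear_combination (-A) * hdmul + (d * B) * hk2
  · have h1 : Dc w 1 0 = d * (k - a) := by
      rw [Dc_one_eq hsmooth (le_refl (0:ℝ)), hderiv1]
      norm_num
      exact Or.inl (by ring)
    rw [h1]
    have hka : k - (a:ℂ) ≠ 0 := by
      intro h
      apply hres
      have : k = (a:ℂ) := by linear_combination h
      rw [← this]; linear_combination hk2
    exact mul_ne_zero hd0 hka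

lemma exists_res (a : ℝ) (ha : 0 < a) (μ : ℂ) (hres : (a:ℂ)^2 + μ = 0) :
    ∃ w : ℝ → ℂ, IsResolventSolution a μ w ∧ Dc w 1 0 ≠ 0 := by
  have hμ : μ = -(a:ℂ)^2 := by linear_combination hres
  have ha0 : (a:ℂ) ≠ 0 := by exact_mod_cast ha.ne'
  set d : ℂ := (2*(a:ℂ))⁻¹ with hd_def
  have hd0 : d ≠ 0 := by rw [hd_def]; exact inv_ne_zero (by simpa using ha0)
  have hdmul : d * (2*(a:ℂ)) = 1 := by
    rw [hd_def]; field_simp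
  set w : ℝ → ℂ := fun x : ℝ => d * ((x:ℂ) * Complex.exp ((-a:ℂ) * x)) with hw
  have hsmooth : ContDiff ℝ 2 w :=
    (contDiff_const.mul (Complex.ofRealCLM.contDiff.mul (contDiff_cexp_mul (-a)))).of_le le_top
  have hderiv1 : deriv w = fun x : ℝ =>
      d * (Complex.exp ((-a:ℂ)*x) + (x:ℂ) * ((-a:ℂ) * Complex.exp ((-a:ℂ)*x))) := by
    funext x
    refine (((hasDerivAt_ofReal' x).mul (hasDerivAt_cexp_mul (-a) x)).const_mul d).deriv.trans ?_
    ring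
  have hderiv2 : deriv (deriv w) = fun x : ℝ =>
      d * ((-a:ℂ) * Complex.exp ((-a:ℂ)*x) + ((-a:ℂ) * Complex.exp ((-a:ℂ)*x) +
        (x:ℂ) * ((-a:ℂ) * ((-a:ℂ) * Complex.exp ((-a:ℂ)*x))))) := by
    rw [hderiv1]
    funext x
    have h2 := ((hasDerivAt_cexp_mul (-a) x).add
      ((hasDerivAt_ofReal' x).mul ((hasDerivAt_cexp_mul (-a) x).const_mul (-a:ℂ)))).const_mul d
    refine h2.deriv.trans ?_
    ring
  have hare : ((-a : ℂ)).re < 0 := by simp [ha]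
  have hL2xw : L2 (fun x : ℝ => (x:ℂ) * Complex.exp ((-a:ℂ) * x)) := L2_mul_cexp ha
  refine ⟨w, ⟨hsmooth.contDiffOn, L2cmul hL2xw d, ?_, ?_, by simp [hw], ?_⟩, ?_⟩
  · refine L2_congr (L2cmul (L2add (L2_cexp hare) (L2cmul hL2xw (-a:ℂ))) d) fun x hx => ?_
    rw [Dc_one_eq hsmooth hx, hderiv1]
    beta_reduce
    ring
  · refine L2_congr (L2cmul (L2add (L2cmul (L2_cexp hare) (-a:ℂ))
      (L2add (L2cmul (L2_cexp hare) (-a:ℂ)) (L2cmul (L2cmul hL2xw (-a:ℂ)) (-a:ℂ)))) d)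
      fun x hx => ?_
    rw [Dc_two_eq hsmooth hx, hderiv2]
    beta_reduce
    ring
  · intro x hx
    rw [Dc_two_eq hsmooth hx, hderiv2, rhs_eq, hw]
    beta_reduce
    set A := Complex.exp ((-a:ℂ)*x)
    rw [hμ]
    linear_combination A * hdmul
  · have h1 : Dc w 1 0 = d := by
      rw [Dc_one_eq hsmooth (le_refl (0:ℝ)), hderiv1]
      norm_num
    rw [h1]; exact hd0

lemma sol_deriv1 {a : ℝ} {μ : ℂ} {w : ℝ → ℂ} (h : IsResolventSolution a μ w) :
    ∀ t : ℝ, 0 ≤ t → HasDerivWithinAt w (Dc w 1 t) (Ici t) t := by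
  intro t ht
  have hd := (h.1.differentiableOn (by norm_num) t ht).hasDerivWithinAt
  rw [show derivWithin w (Ici 0) t = Dc w 1 t from
    (congrFun iteratedDerivWithin_one t).symm] at hd
  exact hd.mono (Ici_subset_Ici.mpr ht)

lemma sol_deriv2 {a : ℝ} {μ : ℂ} {w : ℝ → ℂ} (h : IsResolventSolution a μ w) :
    ∀ t : ℝ, 0 ≤ t → HasDerivWithinAt (Dc w 1)
      (-μ * w t - ((Real.exp (-(a*t)) : ℝ) : ℂ)) (Ici t) t := by
  intro t ht
  have hC1 : ContDiffOn ℝ 1 (derivWithin w (Ici 0)) (Ici 0) :=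
    h.1.derivWithin (uniqueDiffOn_Ici 0) (by rw [one_add_one_eq_two])
  have hd := (hC1.differentiableOn one_ne_zero t ht).hasDerivWithinAt
  have hval : derivWithin (derivWithin w (Ici 0)) (Ici 0) t = Dc w 2 t := by
    rw [Dc, show (2:ℕ) = 1+1 from rfl, iteratedDerivWithin_succ]
    exact derivWithin_congr
      (fun y hy => (congrFun iteratedDerivWithin_one y).symm)
      (congrFun iteratedDerivWithin_one t).symm
  have hode : Dc w 2 t = -μ * w t - ((Real.exp (-(a*t)) : ℝ) : ℂ) := by
    linear_combination -(h.2.2.2.2.2 t ht)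
  rw [hval, hode] at hd
  have hcongr : HasDerivWithinAt (Dc w 1)
      (-μ * w t - ((Real.exp (-(a*t)) : ℝ) : ℂ)) (Ici 0) t := by
    refine hd.congr (fun y hy => ?_) ?_
    · exact congrFun iteratedDerivWithin_one y
    · exact congrFun iteratedDerivWithin_one t
  exact hcongr.mono (Ici_subset_Ici.mpr ht)

lemma sol_unique (a : ℝ) (ha : 0 < a) (μ k : ℂ) (hk2 : k^2 = -μ) (hkre : 0 < k.re)
    (w₀ w : ℝ → ℂ) (h₀ : IsResolventSolution a μ w₀) (h : IsResolventSolution a μ w) :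
    ∀ x : ℝ, 0 ≤ x → w x = w₀ x := by
  have hk0 : k ≠ 0 := fun hh => by simp [hh] at hkre
  set c : ℂ := Dc w 1 0 - Dc w₀ 1 0 with hc
  set S : ℝ → ℂ := fun x : ℝ => c/(2*k) * (Complex.exp (k*x) - Complex.exp ((-k)*x)) with hS
  set S' : ℝ → ℂ :=
    fun x : ℝ => c/(2*k) * (k * Complex.exp (k*x) - (-k) * Complex.exp ((-k)*x)) with hS'
  have hSd : ∀ x:ℝ, HasDerivAt S (S' x) x := fun x =>
    ((hasDerivAt_cexp_mul k x).sub (hasDerivAt_cexp_mul (-k) x)).const_mul _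
  have hS'd : ∀ x:ℝ, HasDerivAt S' (-μ * S x) x := by
    intro x
    have h2 := (((hasDerivAt_cexp_mul k x).const_mul k).sub
      ((hasDerivAt_cexp_mul (-k) x).const_mul (-k))).const_mul (c/(2*k))
    refine h2.congr_deriv ?_
    symm
    rw [hS]
    beta_reduce
    linear_combination (-(c/(2*k)) * (Complex.exp (k*x) - Complex.exp ((-k)*x))) * hk2
  -- the ODE system
  set G : (ℂ × ℂ) →L[ℂ] (ℂ × ℂ) :=
    (ContinuousLinearMap.snd ℂ ℂ ℂ).prod ((-μ) • (ContinuousLinearMap.fst ℂ ℂ ℂ)) with hG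
  set F : ℝ → ℂ × ℂ → ℂ × ℂ :=
    fun t p => (p.2, -μ * p.1 - ((Real.exp (-(a*t)) : ℝ) : ℂ)) with hF
  have hFG : ∀ t p, F t p = G p + (0, -((Real.exp (-(a*t)) : ℝ) : ℂ)) := by
    intro t p
    simp [hF, hG, Prod.ext_iff, sub_eq_add_neg]
  have hlip : ∀ t, LipschitzWith ‖G‖₊ (F t) := by
    intro t
    refine LipschitzWith.of_dist_le_mul fun p q => ?_
    rw [hFG, hFG, dist_add_right]
    exact G.lipschitz.dist_le_mul p q
  have key : ∀ b:ℝ, 0 ≤ b → w b = w₀ b + S b := by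
    intro b hb
    set f : ℝ → ℂ × ℂ := fun t => (w t, Dc w 1 t) with hf
    set g : ℝ → ℂ × ℂ := fun t => (w₀ t + S t, Dc w₀ 1 t + S' t) with hg
    have hcontf : ContinuousOn f (Icc 0 b) :=
      ((h.1.continuousOn.mono Icc_subset_Ici_self).prodMk
        ((h.1.continuousOn_iteratedDerivWithin (m := 1) (by norm_num) (uniqueDiffOn_Ici 0)).mono
          Icc_subset_Ici_self))
    have hcontg : ContinuousOn g (Icc 0 b) := by
      refine ContinuousOn.prodMk ?_ ?_
      · exact (h₀.1.continuousOn.mono Icc_subset_Ici_self).add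
          (Continuous.continuousOn (by fun_prop))
      · exact ((h₀.1.continuousOn_iteratedDerivWithin (m := 1) (by norm_num)
          (uniqueDiffOn_Ici 0)).mono Icc_subset_Ici_self).add
          (Continuous.continuousOn (by fun_prop))
    have hf' : ∀ t ∈ Ico 0 b, HasDerivWithinAt f (F t (f t)) (Ici t) t := by
      intro t ht
      exact (sol_deriv1 h t ht.1).prodMk (sol_deriv2 h t ht.1)
    have hg' : ∀ t ∈ Ico 0 b, HasDerivWithinAt g (F t (g t)) (Ici t) t := by
      intro t ht
      refine HasDerivWithinAt.prodMk
        ((sol_deriv1 h₀ t ht.1).add ((hSd t).hasDerivWithinAt)) ?_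
      have h3 := (sol_deriv2 h₀ t ht.1).add ((hS'd t).hasDerivWithinAt)
      have e : (-μ * w₀ t - ((Real.exp (-(a*t)) : ℝ) : ℂ)) + (-μ * S t)
          = -μ * (w₀ t + S t) - ((Real.exp (-(a*t)) : ℝ) : ℂ) := by ring
      rw [e] at h3
      exact h3
    have hinit : f 0 = g 0 := by
      rw [hf, hg]
      beta_reduce
      have e0 : S 0 = 0 := by rw [hS]; norm_num
      have e1 : S' 0 = c := by
        rw [hS']
        beta_reduce
        rw [Complex.ofReal_zero, mul_zero, mul_zero, Complex.exp_zero,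
          show (k*(1:ℂ) - -k*1) = 2*k by ring,
          div_mul_cancel₀ _ (mul_ne_zero two_ne_zero hk0)]
      rw [e0, e1, h.2.2.2.2.1, h₀.2.2.2.2.1, hc]
      simp only [Prod.mk.injEq]
      constructor <;> ring
    have := ODE_solution_unique hlip hcontf hf' hcontg hg' hinit ⟨hb, le_refl b⟩
    rw [hf, hg] at this
    exact congrArg Prod.fst this
  by_cases hc0 : c = 0
  · intro x hx
    have := key x hx
    rw [hS, hc0] at this
    simpa using this
  · exfalso
    have hL2S : L2 S := by
      refine L2_congr (L2sub h.2.1 h₀.2.1) fun x hx => ?_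
      have := key x hx
      beta_reduce
      linear_combination this
    obtain ⟨X, hX0, hX⟩ := sinh_lower hkre hc0
    exact not_L2_of_ge (by fun_prop) X hX0 (fun x hx => hX x hx) hL2S

lemma exists_k (μ : ℂ) (hμ : ∀ t : ℝ, 0 ≤ t → μ ≠ (t : ℂ)) :
    ∃ k : ℂ, k^2 = -μ ∧ 0 < k.re := by
  obtain ⟨z, hz⟩ := IsAlgClosed.exists_pow_nat_eq (-μ) (n := 2) two_pos
  have hre : z.re ≠ 0 := by
    intro h0
    apply hμ (z.im^2) (sq_nonneg _)
    have : μ = -(z^2) := by rw [hz]; ring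
    rw [this]
    apply Complex.ext
    · simp [Complex.mul_re, pow_two, h0]
    · simp [Complex.mul_im, pow_two, h0]
  rcases lt_or_gt_of_ne hre with h | h
  · exact ⟨-z, by rw [neg_pow]; simpa using hz, by simpa using h⟩
  · exact ⟨z, hz, h⟩

/-- For `μ ∉ [0, ∞)` there is a unique `w ∈ H² ∩ H₀¹` with `−w'' − μw = e^{−ax}`,
and it satisfies `w'(0) ≠ 0`. -/
theorem os_resolvent_solution_exists_unique
    (a : ℝ) (ha : 0 < a) (μ : ℂ) (hμ : ∀ t : ℝ, 0 ≤ t → μ ≠ (t : ℂ)) :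
    (∃ w : ℝ → ℂ, IsResolventSolution a μ w ∧ Dc w 1 0 ≠ 0) ∧
    (∀ w₁ w₂ : ℝ → ℂ, IsResolventSolution a μ w₁ → IsResolventSolution a μ w₂ →
      ∀ x : ℝ, 0 ≤ x → w₁ x = w₂ x) := by
  obtain ⟨k, hk2, hkre⟩ := exists_k μ hμ
  have hex : ∃ w : ℝ → ℂ, IsResolventSolution a μ w ∧ Dc w 1 0 ≠ 0 := by
    by_cases hres : (a:ℂ)^2 + μ = 0
    · exact exists_res a ha μ hres
    · exact exists_nonres a ha μ k hk2 hkre hres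
  refine ⟨hex, ?_⟩
  obtain ⟨w₀, hw₀, _⟩ := hex
  intro w₁ w₂ h1 h2 x hx
  rw [sol_unique a ha μ k hk2 hkre w₀ w₁ hw₀ h1 x hx,
    sol_unique a ha μ k hk2 hkre w₀ w₂ hw₀ h2 x hx]
end

section
/- Let a > 0 and let μ ∈ ℂ with μ ∉ [0,∞). Suppose u : [0,∞) → ℂ is twice continuously differentiable with u, u', u'' in L²(0,∞), u(0) = u'(0) = 0, and −u''(x) − μ·u(x) + u''(0)·e^{−ax} = 0 for all x ≥ 0. Then u is identically zero. (Injectivity of B⁻¹A₀ − λ·id for λ = μ + a² + i·a·R off the half-line M = { μ + a² + i·a·R : μ ≥ 0 }.) -/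
open MeasureTheory Set Complex
open Filter Topology

private lemma memL2_conj {ν : Measure ℝ} {f : ℝ → ℂ} (hf : MemLp f 2 ν) :
    MemLp (fun x => star (f x)) 2 ν := by
  refine ⟨(Complex.continuous_conj.comp_aestronglyMeasurable hf.1), ?_⟩
  have : eLpNorm (fun x => star (f x)) 2 ν = eLpNorm f 2 ν := by
    apply le_antisymm
    · exact eLpNorm_mono (fun x => by simp)
    · exact eLpNorm_mono (fun x => by simp)
  rw [this]; exact hf.2

private lemma integrable_mul_L2 {ν : Measure ℝ} {f g : ℝ → ℂ} (hf : MemLp f 2 ν)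
    (hg : MemLp g 2 ν) : Integrable (fun x => f x * g x) ν := by
  have h := hf.smul (φ := g) hg (p := 2) (q := 2) (r := 1)
  rw [memLp_one_iff_integrable] at h
  exact h.congr (Eventually.of_forall fun x => by simp [mul_comm])

private lemma limit_eq_zero_of_integrableOn {f : ℝ → ℝ} (hf : IntegrableOn f (Ioi 0))
    (h0 : ∀ x, 0 ≤ f x) {l : ℝ} (hl : Tendsto f atTop (𝓝 l)) : l = 0 := by
  by_contra hne
  have hl0 : 0 ≤ l := ge_of_tendsto' hl h0
  have hlpos : 0 < l := lt_of_le_of_ne hl0 (Ne.symm hne)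
  obtain ⟨M, hM⟩ := (Filter.eventually_atTop.1
    (hl.eventually (eventually_ge_nhds (by linarith : l / 2 < l))))
  set M' := max M 1 with hM'
  have hint : IntegrableOn f (Ioi M') :=
    hf.mono_set (fun x hx => mem_Ioi.2
      (lt_of_lt_of_le (lt_of_lt_of_le zero_lt_one (le_max_right M 1)) (mem_Ioi.1 hx).le))
  have hconst : Integrable (fun _ : ℝ => l / 2) (volume.restrict (Ioi M')) := by
    refine hint.mono' aestronglyMeasurable_const ?_
    filter_upwards [ae_restrict_mem measurableSet_Ioi] with x hx
    have := hM x ((le_max_left M 1).trans hx.le)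
    rw [Real.norm_eq_abs, abs_of_pos (by linarith)]
    exact this
  rw [integrable_const_iff] at hconst
  rcases hconst with h | h
  · linarith
  · have := measure_lt_top (volume.restrict (Ioi M')) univ
    simp [Measure.restrict_apply_univ] at this

private lemma ftc_Ici {F G : ℝ → ℂ} (hFc : ContinuousOn F (Ici 0))
    (hGc : ContinuousOn G (Ici 0))
    (hd : ∀ x ∈ Ici (0:ℝ), HasDerivWithinAt F (G x) (Ici 0) x) {R : ℝ} (hR : 0 ≤ R) :
    ∫ x in (0:ℝ)..R, G x = F R - F 0 := by
  refine intervalIntegral.integral_eq_sub_of_hasDeriv_right_of_le hR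
    (hFc.mono Icc_subset_Ici_self) (fun x hx => ?_) ?_
  · exact ((hd x (mem_Ici.2 hx.1.le)).hasDerivAt (Ici_mem_nhds hx.1)).hasDerivWithinAt
  · apply ContinuousOn.intervalIntegrable
    rw [uIcc_of_le hR]; exact hGc.mono Icc_subset_Ici_self

private lemma tendsto_zero_aux {f f' : ℝ → ℂ}
    (hfc : ContinuousOn f (Set.Ici 0)) (hf'c : ContinuousOn f' (Set.Ici 0))
    (hd : ∀ x ∈ Set.Ici (0:ℝ), HasDerivWithinAt f (f' x) (Set.Ici 0) x)
    (hf2 : MemLp f 2 (volume.restrict (Set.Ioi 0)))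
    (hf'2 : MemLp f' 2 (volume.restrict (Set.Ioi 0))) :
    Tendsto f atTop (𝓝 0) := by
  set m : ℝ → ℂ := fun x => f x * star (f x) with hm
  set m' : ℝ → ℂ := fun x => (f' x * star (f x) + f x * star (f' x)) with hm'
  have hdm : ∀ x ∈ Set.Ici (0:ℝ), HasDerivWithinAt m (m' x) (Set.Ici 0) x := fun x hx =>
    (hd x hx).mul ((hd x hx).star)
  have hstar_c : ContinuousOn (fun x => star (f x)) (Ici 0) :=
    continuous_star.comp_continuousOn hfc
  have hstar'_c : ContinuousOn (fun x => star (f' x)) (Ici 0) :=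
    continuous_star.comp_continuousOn hf'c
  have hmc : ContinuousOn m (Ici 0) := hfc.mul hstar_c
  have hm'c : ContinuousOn m' (Ici 0) := (hf'c.mul hstar_c).add (hfc.mul hstar'_c)
  have hint : Integrable m' (volume.restrict (Ioi 0)) :=
    (integrable_mul_L2 hf'2 (memL2_conj hf2)).add (integrable_mul_L2 hf2 (memL2_conj hf'2))
  have htend := intervalIntegral_tendsto_integral_Ioi 0 hint tendsto_id
  have hml : Tendsto m atTop (𝓝 ((∫ x in Ioi (0:ℝ), m' x) + m 0)) := by
    refine Tendsto.congr' ?_ (htend.add_const (m 0))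
    filter_upwards [eventually_ge_atTop (0:ℝ)] with R hR
    simp only [id_eq]; rw [ftc_Ici hmc hm'c hdm hR]; ring
  set L := (∫ x in Ioi (0:ℝ), m' x) + m 0 with hL
  have hNl : Tendsto (fun x => (m x).re) atTop (𝓝 L.re) :=
    (Complex.continuous_re.tendsto L).comp hml
  have hNint : IntegrableOn (fun x => (m x).re) (Ioi 0) :=
    (integrable_mul_L2 hf2 (memL2_conj hf2)).re
  have hN0 : ∀ x, 0 ≤ (m x).re := fun x => by
    simp only [hm, Complex.star_def, Complex.mul_conj]
    exact Complex.normSq_nonneg _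
  have hLre : L.re = 0 := limit_eq_zero_of_integrableOn hNint hN0 hNl
  rw [hLre] at hNl
  rw [tendsto_zero_iff_norm_tendsto_zero]
  have : ∀ x, ‖f x‖ = Real.sqrt ((m x).re) := fun x => by
    simp only [hm, Complex.star_def, Complex.mul_conj]
    rw [Complex.ofReal_re, Complex.norm_def]
  simp only [this]
  have := (Real.continuous_sqrt.tendsto 0).comp hNl
  simpa [Function.comp_def] using this

/-- Injectivity of `B⁻¹A₀ − λ·id` for `λ = μ + a² + iaR` off the half-line
`M = {μ + a² + iaR : μ ≥ 0}`: if `u ∈ H² ∩ H₀¹` with `u(0) = u'(0) = 0` satisfies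
`−u'' − μu + u''(0)e^{−ax} = 0`, then `u ≡ 0`. -/
theorem os_BinvA0_injective_off_M
    (a : ℝ) (ha : 0 < a) (μ : ℂ) (hμ : ∀ t : ℝ, 0 ≤ t → μ ≠ (t : ℂ))
    (u : ℝ → ℂ) (hu : ContDiffOn ℝ 2 u (Set.Ici 0))
    (huL2 : L2 u) (hu'L2 : L2 (Dc u 1)) (hu''L2 : L2 (Dc u 2))
    (hu0 : u 0 = 0) (hu'0 : Dc u 1 0 = 0)
    (heq : ∀ x : ℝ, 0 ≤ x →
      -(Dc u 2 x) - μ * u x + Dc u 2 0 * ((Real.exp (-(a * x)) : ℝ) : ℂ) = 0) :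
    ∀ x : ℝ, 0 ≤ x → u x = 0 := by
  have hUD : UniqueDiffOn ℝ (Set.Ici (0:ℝ)) := uniqueDiffOn_Ici 0
  set v := derivWithin u (Set.Ici 0) with hvdef
  set w := derivWithin v (Set.Ici 0) with hwdef
  have hDc1 : ∀ x ∈ Set.Ici (0:ℝ), Dc u 1 x = v x := fun x hx =>
    congrFun iteratedDerivWithin_one x
  have hDc2 : ∀ x ∈ Set.Ici (0:ℝ), Dc u 2 x = w x := fun x hx => by
    show iteratedDerivWithin 2 u (Set.Ici 0) x = w x
    have h2 : (2:ℕ) = 1 + 1 := rfl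
    rw [h2, iteratedDerivWithin_succ]
    exact derivWithin_congr (fun y hy => congrFun iteratedDerivWithin_one y)
      (congrFun iteratedDerivWithin_one x)
  have hu_c : ContinuousOn u (Set.Ici 0) := hu.continuousOn
  have hv_cd : ContDiffOn ℝ 1 v (Set.Ici 0) := hu.derivWithin (m := 1) hUD (by norm_num)
  have hv_c : ContinuousOn v (Set.Ici 0) := hv_cd.continuousOn
  have hw_c : ContinuousOn w (Set.Ici 0) :=
    (hv_cd.derivWithin (m := 0) hUD (by norm_num)).continuousOn
  have hder_u : ∀ x ∈ Set.Ici (0:ℝ), HasDerivWithinAt u (v x) (Set.Ici 0) x := fun x hx =>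
    (hu.differentiableOn (by norm_num) x hx).hasDerivWithinAt
  have hder_v : ∀ x ∈ Set.Ici (0:ℝ), HasDerivWithinAt v (w x) (Set.Ici 0) x := fun x hx =>
    (hv_cd.differentiableOn (by norm_num) x hx).hasDerivWithinAt
  -- L2 facts
  have haeIoi : ∀ᵐ x ∂(volume.restrict (Set.Ioi (0:ℝ))), x ∈ Set.Ioi (0:ℝ) :=
    ae_restrict_mem measurableSet_Ioi
  have hv2 : MemLp v 2 (volume.restrict (Set.Ioi 0)) := by
    refine MemLp.ae_eq ?_ hu'L2
    filter_upwards [haeIoi] with x hx using hDc1 x (mem_Ici.2 (le_of_lt (mem_Ioi.1 hx)))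
  have hw2 : MemLp w 2 (volume.restrict (Set.Ioi 0)) := by
    refine MemLp.ae_eq ?_ hu''L2
    filter_upwards [haeIoi] with x hx using hDc2 x (mem_Ici.2 (le_of_lt (mem_Ioi.1 hx)))
  have hu2 : MemLp u 2 (volume.restrict (Set.Ioi 0)) := huL2
  -- initial values
  have hv0 : v 0 = 0 := by rw [← hDc1 0 self_mem_Ici]; exact hu'0
  -- the exponential
  set E : ℝ → ℂ := fun x => ((Real.exp (-(a * x)) : ℝ) : ℂ) with hEdef
  have hE : ∀ x : ℝ, HasDerivAt E (-(a:ℂ) * E x) x := fun x => by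
    have hinner : HasDerivAt (fun y : ℝ => -(a * y)) (-(a * 1)) x :=
      ((hasDerivAt_id x).const_mul a).neg
    have h1 := (Real.hasDerivAt_exp (-(a * x))).comp x hinner
    have h2 := h1.ofReal_comp
    exact h2.congr_deriv (by simp only [hEdef]; push_cast; ring)
  set c : ℂ := w 0 with hcdef
  have heq' : ∀ x ∈ Set.Ici (0:ℝ), c * E x = w x + μ * u x := fun x hx => by
    have h := heq x hx
    rw [hDc2 x hx, hDc2 0 self_mem_Ici] at h
    linear_combination h
  -- combined antiderivative
  set F : ℝ → ℂ := fun x => (a:ℂ)^2 * (v x * star (u x)) - μ * (u x * star (v x))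
      + c * (E x * (star (v x) + (a:ℂ) * star (u x))) with hFdef
  set g : ℝ → ℂ := fun x => w x * star (w x) + ((a:ℂ)^2 - μ) * (v x * star (v x))
      - μ * (a:ℂ)^2 * (u x * star (u x)) with hgdef
  have hdF : ∀ x ∈ Set.Ici (0:ℝ), HasDerivWithinAt F (g x) (Set.Ici 0) x := by
    intro x hx
    have h1 := ((hder_v x hx).mul ((hder_u x hx).star)).const_mul ((a:ℂ)^2)
    have h2 := ((hder_u x hx).mul ((hder_v x hx).star)).const_mul μ
    have h3 := (((hE x).hasDerivWithinAt).mul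
      (((hder_v x hx).star).add (((hder_u x hx).star).const_mul (a:ℂ)))).const_mul c
    have H := (h1.sub h2).add h3
    refine H.congr_deriv ?_
    simp only [Pi.add_apply]
    have hz : w x + μ * u x - c * E x = 0 := by rw [heq' x hx]; ring
    linear_combination (-(star (w x) - (a:ℂ)^2 * star (u x))) * hz
  have hEc : Continuous E := Complex.continuous_ofReal.comp (Real.continuous_exp.comp
    (continuous_const.mul continuous_id).neg)
  have hstaru_c : ContinuousOn (fun x => star (u x)) (Set.Ici 0) :=
    continuous_star.comp_continuousOn hu_c
  have hstarv_c : ContinuousOn (fun x => star (v x)) (Set.Ici 0) :=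
    continuous_star.comp_continuousOn hv_c
  have hstarw_c : ContinuousOn (fun x => star (w x)) (Set.Ici 0) :=
    continuous_star.comp_continuousOn hw_c
  have hFc : ContinuousOn F (Set.Ici 0) := by
    refine (((hv_c.mul hstaru_c).const_smul ((a:ℂ)^2)).sub
      ((hu_c.mul hstarv_c).const_smul μ)).add ?_
    exact ((hEc.continuousOn.mul (hstarv_c.add (hstaru_c.const_smul (a:ℂ)))).const_smul c)
  have hgc : ContinuousOn g (Set.Ici 0) := by
    refine ((hw_c.mul hstarw_c).add ((hv_c.mul hstarv_c).const_smul ((a:ℂ)^2 - μ))).sub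
      ((hu_c.mul hstaru_c).const_smul (μ * (a:ℂ)^2))
  have hF0 : F 0 = 0 := by
    simp [hFdef, hu0, hv0]
  -- integrability of g on (0,∞)
  have hgint : Integrable g (volume.restrict (Set.Ioi 0)) := by
    refine ((integrable_mul_L2 hw2 (memL2_conj hw2)).add
      ((integrable_mul_L2 hv2 (memL2_conj hv2)).const_mul ((a:ℂ)^2 - μ))).sub
      ((integrable_mul_L2 hu2 (memL2_conj hu2)).const_mul (μ * (a:ℂ)^2))
  -- limits of u and v at infinity
  have hu_lim : Tendsto u atTop (𝓝 0) := tendsto_zero_aux hu_c hv_c hder_u hu2 hv2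
  have hv_lim : Tendsto v atTop (𝓝 0) := tendsto_zero_aux hv_c hw_c hder_v hv2 hw2
  have hstaru_lim : Tendsto (fun x => star (u x)) atTop (𝓝 0) := by
    simpa [Function.comp_def] using (continuous_star.tendsto (0:ℂ)).comp hu_lim
  have hstarv_lim : Tendsto (fun x => star (v x)) atTop (𝓝 0) := by
    simpa [Function.comp_def] using (continuous_star.tendsto (0:ℂ)).comp hv_lim
  have hE_lim : Tendsto E atTop (𝓝 0) := by
    have h1 : Tendsto (fun x : ℝ => -(a * x)) atTop atBot := by
      have := Filter.Tendsto.const_mul_atTop ha (tendsto_id (α := ℝ))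
      exact tendsto_neg_atTop_atBot.comp this
    have h2 : Tendsto (fun x : ℝ => Real.exp (-(a * x))) atTop (𝓝 0) :=
      Real.tendsto_exp_atBot.comp h1
    have := (Complex.continuous_ofReal.tendsto 0).comp h2
    simpa only [Function.comp_def, Complex.ofReal_zero] using this
  have hF_lim : Tendsto F atTop (𝓝 0) := by
    have h := (((hv_lim.mul hstaru_lim).const_mul ((a:ℂ)^2)).sub
      ((hu_lim.mul hstarv_lim).const_mul μ)).add
      ((hE_lim.mul (hstarv_lim.add (hstaru_lim.const_mul (a:ℂ)))).const_mul c)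
    simpa [hFdef] using h
  -- the integral identity
  have htend := intervalIntegral_tendsto_integral_Ioi 0 hgint tendsto_id
  have hFtend : Tendsto F atTop (𝓝 (∫ x in Set.Ioi (0:ℝ), g x)) := by
    refine Tendsto.congr' ?_ htend
    filter_upwards [eventually_ge_atTop (0:ℝ)] with R hR
    simp only [id_eq]
    rw [ftc_Ici hFc hgc hdF hR, hF0, sub_zero]
  have hJ : (∫ x in Set.Ioi (0:ℝ), g x) = 0 := tendsto_nhds_unique hFtend hF_lim
  -- decompose the integral
  have hint2 : Integrable (fun x => w x * star (w x)) (volume.restrict (Set.Ioi 0)) :=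
    integrable_mul_L2 hw2 (memL2_conj hw2)
  have hint1 : Integrable (fun x => v x * star (v x)) (volume.restrict (Set.Ioi 0)) :=
    integrable_mul_L2 hv2 (memL2_conj hv2)
  have hint0 : Integrable (fun x => u x * star (u x)) (volume.restrict (Set.Ioi 0)) :=
    integrable_mul_L2 hu2 (memL2_conj hu2)
  set n0 := ∫ x in Set.Ioi (0:ℝ), Complex.normSq (u x) with hn0def
  set n1 := ∫ x in Set.Ioi (0:ℝ), Complex.normSq (v x) with hn1def
  set n2 := ∫ x in Set.Ioi (0:ℝ), Complex.normSq (w x) with hn2def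
  have hI0 : (∫ x in Set.Ioi (0:ℝ), u x * star (u x)) = (n0 : ℂ) := by
    simp_rw [Complex.star_def, Complex.mul_conj]
    exact integral_ofReal
  have hI1 : (∫ x in Set.Ioi (0:ℝ), v x * star (v x)) = (n1 : ℂ) := by
    simp_rw [Complex.star_def, Complex.mul_conj]
    exact integral_ofReal
  have hI2 : (∫ x in Set.Ioi (0:ℝ), w x * star (w x)) = (n2 : ℂ) := by
    simp_rw [Complex.star_def, Complex.mul_conj]
    exact integral_ofReal
  have hJsplit : (∫ x in Set.Ioi (0:ℝ), g x)
      = (n2:ℂ) + ((a:ℂ)^2 - μ) * n1 - μ * (a:ℂ)^2 * n0 := by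
    simp only [hgdef]
    have hC : Integrable (fun x => ((a:ℂ)^2 - μ) * (v x * star (v x)))
        (volume.restrict (Set.Ioi 0)) := hint1.const_mul _
    have hB : Integrable (fun x => μ * (a:ℂ)^2 * (u x * star (u x)))
        (volume.restrict (Set.Ioi 0)) := hint0.const_mul _
    have hA : Integrable (fun x => w x * star (w x) + ((a:ℂ)^2 - μ) * (v x * star (v x)))
        (volume.restrict (Set.Ioi 0)) := hint2.add hC
    rw [integral_sub hA hB, integral_add hint2 hC, integral_const_mul, integral_const_mul,
      hI0, hI1, hI2]
  rw [hJsplit] at hJ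
  have hn0nn : 0 ≤ n0 := integral_nonneg (fun x => Complex.normSq_nonneg _)
  have hn1nn : 0 ≤ n1 := integral_nonneg (fun x => Complex.normSq_nonneg _)
  have hn2nn : 0 ≤ n2 := integral_nonneg (fun x => Complex.normSq_nonneg _)
  have hmain : μ * ((n1 + a^2*n0 : ℝ) : ℂ) = ((n2 + a^2*n1 : ℝ) : ℂ) := by
    push_cast
    linear_combination -hJ
  by_cases hcase : n1 + a^2*n0 = 0
  · -- then n0 = 0, so u = 0 a.e., and by continuity u = 0
    have ha2 : 0 < a^2 := by positivity
    have hn0 : n0 = 0 := by nlinarith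
    have hn0int : Integrable (fun x => Complex.normSq (u x)) (volume.restrict (Set.Ioi 0)) := by
      refine hint0.re.congr (Eventually.of_forall fun x => ?_)
      simp [Complex.star_def, Complex.mul_conj]
    have haez : (fun x => Complex.normSq (u x)) =ᵐ[volume.restrict (Set.Ioi 0)] 0 :=
      (integral_eq_zero_iff_of_nonneg (fun x => Complex.normSq_nonneg _) hn0int).1 hn0
    intro x0 hx0
    by_contra hne
    have hev : ∀ᶠ y in 𝓝[Set.Ici 0] x0, u y ≠ 0 := (hu_c x0 hx0).eventually_ne hne
    obtain ⟨ε, hε, hball⟩ := Metric.mem_nhdsWithin_iff.1 hev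
    have hAsub : Set.Ioo x0 (x0+ε) ⊆ Set.Ioi (0:ℝ) := fun y hy => lt_of_le_of_lt hx0 hy.1
    have h1 := haez.filter_mono (ae_mono (Measure.restrict_mono hAsub le_rfl))
    have h2 : ∀ᵐ y ∂(volume.restrict (Set.Ioo x0 (x0+ε))), y ∈ Set.Ioo x0 (x0+ε) :=
      ae_restrict_mem measurableSet_Ioo
    have hnb : (ae (volume.restrict (Set.Ioo x0 (x0+ε)))).NeBot := by
      refine ae_neBot.2 ?_
      rw [Ne, Measure.restrict_eq_zero]
      simp only [Real.volume_Ioo]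
      intro hcontra
      rw [ENNReal.ofReal_eq_zero] at hcontra
      linarith
    obtain ⟨y, hy1, hy2⟩ := (h1.and h2).exists
    have hymem : u y ≠ 0 := by
      apply hball
      constructor
      · rw [Metric.mem_ball, Real.dist_eq, abs_of_pos (by linarith [hy2.1] : (0:ℝ) < y - x0)]
        linarith [hy2.2]
      · exact le_trans hx0 hy2.1.le
    exact hymem (Complex.normSq_eq_zero.1 (by simpa using hy1))
  · have hmu : μ = (((n2 + a^2*n1)/(n1 + a^2*n0) : ℝ) : ℂ) := by
      rw [Complex.ofReal_div, eq_div_iff (Complex.ofReal_ne_zero.mpr hcase)]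
      exact hmain
    refine absurd hmu (hμ _ (div_nonneg ?_ ?_))
    · exact add_nonneg hn2nn (mul_nonneg (sq_nonneg a) hn1nn)
    · exact add_nonneg hn1nn (mul_nonneg (sq_nonneg a) hn0nn)
end

section
/- Let a > 0, let μ ∈ ℝ with μ ≥ 0, and let γ ∈ ℂ. Suppose u : [0,∞) → ℂ is twice continuously differentiable with u, u', u'' in L²(0,∞), u(0) = u'(0) = 0, and −u''(x) − μ·u(x) + u''(0)·e^{−ax} = γ·(1 − e^{−ax})·e^{−ax} for all x ≥ 0. Then γ = 0 and u is identically zero. (Consequently, for λ on the half-line M = { μ + a² + i·a·R : μ ≥ 0 }, the operator B⁻¹A₀ − λ·id is one-to-one but not onto, hence not a Fredholm operator of index zero; every such λ belongs to the essential spectrum of the Orr–Sommerfeld pencil.) -/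
open MeasureTheory Set Complex

/-- For `μ ≥ 0`: if `u ∈ H² ∩ H₀²` satisfies
`−u'' − μu + u''(0)e^{−ax} = γ(1 − e^{−ax})e^{−ax}` on `[0, ∞)`, then `γ = 0` and
`u ≡ 0`.  (Hence, for `λ` on the half-line `M = {μ + a² + iaR : μ ≥ 0}`, the operator
`B⁻¹A₀ − λ·id` is one-to-one but not onto, so `λ` is in the essential spectrum.) -/
theorem os_BinvA0_not_onto_on_M
    (a : ℝ) (ha : 0 < a) (μ : ℝ) (hμ : 0 ≤ μ) (γ : ℂ)
    (u : ℝ → ℂ) (hu : ContDiffOn ℝ 2 u (Set.Ici 0))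
    (huL2 : L2 u) (hu'L2 : L2 (Dc u 1)) (hu''L2 : L2 (Dc u 2))
    (hu0 : u 0 = 0) (hu'0 : Dc u 1 0 = 0)
    (heq : ∀ x : ℝ, 0 ≤ x →
      -(Dc u 2 x) - (μ : ℂ) * u x + Dc u 2 0 * ((Real.exp (-(a * x)) : ℝ) : ℂ)
        = γ * (1 - ((Real.exp (-(a * x)) : ℝ) : ℂ)) * ((Real.exp (-(a * x)) : ℝ) : ℂ)) :
    γ = 0 ∧ ∀ x : ℝ, 0 ≤ x → u x = 0 := by
  have hQ := uniqueDiffOn_Ici (0:ℝ)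
  set c : ℂ := Dc u 2 0 with hc
  have hden1 : ((a:ℂ)^2 + (μ:ℂ)) ≠ 0 := by
    rw [show ((a:ℂ)^2 + (μ:ℂ)) = ((a^2 + μ : ℝ) : ℂ) by push_cast; ring]
    exact_mod_cast (by positivity : (0:ℝ) < a^2 + μ).ne'
  have hden2 : (4*(a:ℂ)^2 + (μ:ℂ)) ≠ 0 := by
    rw [show (4*(a:ℂ)^2 + (μ:ℂ)) = ((4*a^2 + μ : ℝ) : ℂ) by push_cast; ring]
    exact_mod_cast (by positivity : (0:ℝ) < 4*a^2 + μ).ne'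
  set A : ℂ := (c - γ) / ((a:ℂ)^2 + μ) with hA
  set B : ℂ := γ / (4*(a:ℂ)^2 + μ) with hB
  have hAeq : c - γ = ((a:ℂ)^2 + (μ:ℂ)) * A := by rw [hA]; field_simp
  have hBeq : γ = (4*(a:ℂ)^2 + (μ:ℂ)) * B := by rw [hB]; field_simp
  set e : ℝ → ℂ := fun x => ((Real.exp (-(a * x)) : ℝ) : ℂ) with he
  have heD : ∀ x : ℝ, HasDerivAt e (-(a:ℂ) * e x) x := by
    intro x
    have h := (((hasDerivAt_id x).const_mul a).neg.exp).ofReal_comp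
    convert h using 1
    rw [he]
    push_cast [id_eq, Pi.neg_apply]
    ring
    rw [he]
    simp only [Pi.neg_apply, id_eq]
    push_cast
    ring
  have hnorme : ∀ x : ℝ, ‖e x‖ = Real.exp (-(a*x)) := by
    intro x
    rw [he]
    rw [Complex.norm_real, Real.norm_eq_abs, abs_of_pos (Real.exp_pos _)]
  -- derivatives of u
  have hDc1 : ∀ y ∈ Ici (0:ℝ), Dc u 1 y = derivWithin u (Ici 0) y := fun y hy =>
    congrFun iteratedDerivWithin_one y
  have hu1d : ∀ x ∈ Ici (0:ℝ), HasDerivWithinAt u (Dc u 1 x) (Ici 0) x := by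
    intro x hx
    rw [hDc1 x hx]
    exact (hu.differentiableOn two_ne_zero x hx).hasDerivWithinAt
  have hu1c : ContDiffOn ℝ 1 (derivWithin u (Ici 0)) (Ici 0) :=
    hu.derivWithin hQ (by norm_num)
  have hDc2 : ∀ x ∈ Ici (0:ℝ), Dc u 2 x = derivWithin (derivWithin u (Ici 0)) (Ici 0) x := by
    intro x hx
    rw [Dc, iteratedDerivWithin_succ]
    exact derivWithin_congr (fun y hy => congrFun iteratedDerivWithin_one y)
      (congrFun iteratedDerivWithin_one x)
  have hu2d : ∀ x ∈ Ici (0:ℝ), HasDerivWithinAt (Dc u 1) (Dc u 2 x) (Ici 0) x := by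
    intro x hx
    rw [hDc2 x hx]
    exact ((hu1c x hx).differentiableWithinAt one_ne_zero).hasDerivWithinAt.congr
      (fun y hy => hDc1 y hy) (hDc1 x hx)
  -- the auxiliary functions
  set v : ℝ → ℂ := fun x => u x - (A * e x + B * (e x * e x)) with hv
  set v1 : ℝ → ℂ := fun x => Dc u 1 x + (((a:ℂ)*A) * e x + (2*(a:ℂ)*B) * (e x * e x)) with hv1
  have hvd : ∀ x ∈ Ici (0:ℝ), HasDerivWithinAt v (v1 x) (Ici 0) x := by
    intro x hx
    have hD := (hu1d x hx).sub
      (((heD x).const_mul A).add (((heD x).mul (heD x)).const_mul B)).hasDerivWithinAt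
    convert hD using 1
    · rfl
    · rfl
    rw [hv1]
    ring
  have hkey : ∀ x ∈ Ici (0:ℝ),
      Dc u 2 x - (a:ℂ)^2*A*e x - 4*(a:ℂ)^2*B*(e x * e x) = -(μ:ℂ) * v x := by
    intro x hx
    have h := heq x hx
    rw [hv]
    linear_combination -h + (e x) * hAeq + (e x * e x) * hBeq
  have hv1d : ∀ x ∈ Ici (0:ℝ), HasDerivWithinAt v1 (-(μ:ℂ) * v x) (Ici 0) x := by
    intro x hx
    have hD := (hu2d x hx).add
      ((((heD x).const_mul ((a:ℂ)*A)).add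
        (((heD x).mul (heD x)).const_mul (2*(a:ℂ)*B)))).hasDerivWithinAt
    convert hD using 1
    · rfl
    · rfl
    rw [← hkey x hx]
    ring
  -- energy is constant
  set F : ℝ → ℂ := fun x => v1 x * star (v1 x) + (μ:ℂ) * (v x * star (v x)) with hF
  have hFd : ∀ x ∈ Ici (0:ℝ), HasDerivWithinAt F 0 (Ici 0) x := by
    intro x hx
    have h1 := hv1d x hx
    have h0 := hvd x hx
    have hD := (h1.mul h1.star).add ((h0.mul h0.star).const_mul (μ:ℂ))
    convert hD using 1
    · rfl
    · rfl
    simp only [star_mul', star_neg, Complex.star_def, Complex.conj_ofReal]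
    ring
  set E : ℝ → ℝ := fun x => (F x).re with hE
  have hEd : ∀ x ∈ Ici (0:ℝ), HasDerivWithinAt E 0 (Ici 0) x := by
    intro x hx
    have := Complex.reCLM.hasFDerivAt.comp_hasDerivWithinAt x (hFd x hx)
    exact this
  have hEval : ∀ x : ℝ, E x = Complex.normSq (v1 x) + μ * Complex.normSq (v x) := by
    intro x
    rw [hE, hF]
    simp [Complex.star_def, Complex.mul_conj, ← Complex.ofReal_mul, ← Complex.ofReal_add]
  have hEconst : ∀ x : ℝ, 0 ≤ x → E x = E 0 := by
    intro x hx
    have := constant_of_has_deriv_right_zero (f := E) (a := 0) (b := x)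
      (fun y hy => (hEd y hy.1).continuousWithinAt.mono Icc_subset_Ici_self)
      (fun y hy => (hEd y hy.1).mono (Ici_subset_Ici.mpr hy.1))
    exact this x (right_mem_Icc.mpr hx)
  -- integrability
  have hcont_e : Continuous e := by
    rw [he]; fun_prop
  have heL2 : MemLp e 2 (volume.restrict (Ioi 0)) := by
    rw [memLp_two_iff_integrable_sq_norm (hcont_e.aestronglyMeasurable)]
    refine ((exp_neg_integrableOn_Ioi 0 (by positivity : (0:ℝ) < 2*a))).congr
      (Filter.Eventually.of_forall fun x => ?_)
    show Real.exp (-(2*a)*x) = ‖e x‖^2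
    rw [hnorme, ← Real.exp_nat_mul]
    congr 1
    push_cast
    ring
  have he2L2 : MemLp (fun x => e x * e x) 2 (volume.restrict (Ioi 0)) := by
    rw [memLp_two_iff_integrable_sq_norm (f := fun x => e x * e x) ((hcont_e.mul hcont_e).aestronglyMeasurable)]
    refine ((exp_neg_integrableOn_Ioi 0 (by positivity : (0:ℝ) < 4*a))).congr
      (Filter.Eventually.of_forall fun x => ?_)
    show Real.exp (-(4*a)*x) = ‖e x * e x‖^2
    rw [norm_mul, hnorme, ← Real.exp_add, ← Real.exp_nat_mul]
    congr 1
    push_cast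
    ring
  have hvL2 : MemLp v 2 (volume.restrict (Ioi 0)) :=
    huL2.sub ((heL2.const_mul A).add (he2L2.const_mul B))
  have hv1L2 : MemLp v1 2 (volume.restrict (Ioi 0)) :=
    hu'L2.add ((heL2.const_mul ((a:ℂ)*A)).add (he2L2.const_mul (2*(a:ℂ)*B)))
  have hInt : ∀ f : ℝ → ℂ, MemLp f 2 (volume.restrict (Ioi 0)) →
      Integrable (fun x => Complex.normSq (f x)) (volume.restrict (Ioi 0)) := by
    intro f hf
    refine ((memLp_two_iff_integrable_sq_norm hf.aestronglyMeasurable).mp hf).congr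
      (Filter.Eventually.of_forall fun x => ?_)
    show ‖f x‖^2 = Complex.normSq (f x)
    rw [Complex.sq_norm]
  have hEint : Integrable E (volume.restrict (Ioi 0)) := by
    refine (((hInt v1 hv1L2).add ((hInt v hvL2).const_mul μ))).congr
      (Filter.Eventually.of_forall fun x => ?_)
    exact (hEval x).symm
  -- the energy vanishes
  have hvolIoi : volume (Ioi (0:ℝ)) = ⊤ := Real.volume_Ioi
  have hE0 : E 0 = 0 := by
    have hae : (fun _ : ℝ => E 0) =ᵐ[volume.restrict (Ioi 0)] E :=
      (ae_restrict_mem measurableSet_Ioi).mono fun x hx => (hEconst x hx.le).symm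
    have hint : Integrable (fun _ : ℝ => E 0) (volume.restrict (Ioi 0)) := hEint.congr hae.symm
    rcases integrable_const_iff.mp hint with h | h
    · exact h
    · rw [isFiniteMeasure_iff, Measure.restrict_apply_univ, hvolIoi] at h
      exact absurd h (by simp)
  have hv1zero : ∀ x : ℝ, 0 ≤ x → v1 x = 0 := by
    intro x hx
    have h1 := hEval x
    rw [hEconst x hx, hE0] at h1
    have h2 : 0 ≤ μ * Complex.normSq (v x) := mul_nonneg hμ (Complex.normSq_nonneg _)
    have h3 : Complex.normSq (v1 x) = 0 := by
      have := Complex.normSq_nonneg (v1 x)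
      linarith
    exact Complex.normSq_eq_zero.mp h3
  -- v is constant, hence zero
  have hvconst : ∀ x : ℝ, 0 ≤ x → v x = v 0 := by
    intro x hx
    have := constant_of_has_deriv_right_zero (f := v) (a := 0) (b := x)
      (fun y hy => (hvd y hy.1).continuousWithinAt.mono Icc_subset_Ici_self)
      (fun y hy => by
        have h := (hvd y hy.1).mono (Ici_subset_Ici.mpr hy.1)
        rwa [hv1zero y hy.1] at h)
    exact this x (right_mem_Icc.mpr hx)
  have hv0 : v 0 = 0 := by
    have hae : (fun _ : ℝ => Complex.normSq (v 0)) =ᵐ[volume.restrict (Ioi 0)]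
        (fun x => Complex.normSq (v x)) :=
      (ae_restrict_mem measurableSet_Ioi).mono fun x hx => by
        show Complex.normSq (v 0) = Complex.normSq (v x)
        rw [hvconst x hx.le]
    have hint : Integrable (fun _ : ℝ => Complex.normSq (v 0)) (volume.restrict (Ioi 0)) :=
      (hInt v hvL2).congr hae.symm
    rcases integrable_const_iff.mp hint with h | h
    · exact Complex.normSq_eq_zero.mp h
    · rw [isFiniteMeasure_iff, Measure.restrict_apply_univ, hvolIoi] at h
      exact absurd h (by simp)
  have hvzero : ∀ x : ℝ, 0 ≤ x → v x = 0 := fun x hx => (hvconst x hx).trans hv0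
  -- extract the linear relations
  have he0 : e 0 = 1 := by rw [he]; simp
  have hAB : A + B = 0 := by
    have h := hvzero 0 le_rfl
    rw [hv] at h
    simp only [he0, hu0, mul_one, one_mul] at h
    linear_combination -h
  have hA2B : A + 2*B = 0 := by
    have h := hv1zero 0 le_rfl
    rw [hv1] at h
    simp only [he0, hu'0, mul_one, one_mul] at h
    have ha' : (a:ℂ) ≠ 0 := by exact_mod_cast ha.ne'
    have h' : (a:ℂ) * (A + 2*B) = 0 := by linear_combination h
    exact (mul_eq_zero.mp h').resolve_left ha'
  have hBzero : B = 0 := by linear_combination hA2B - hAB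
  have hAzero : A = 0 := by linear_combination hAB - hBzero
  have hγ : γ = 0 := by rw [hBeq, hBzero, mul_zero]
  refine ⟨hγ, fun x hx => ?_⟩
  have h := hvzero x hx
  rw [hv] at h
  rw [hAzero, hBzero] at h
  simpa using h
end
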